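/- arXiv:1306.3611 — 4 statements merged into one kernel-verified Lean document; each statement's English description precedes it below -/
import Mathlib

section
/- Let M and M' be perfect matchings of K_{2m} and let (e₁,...,e_m) be the edges of M arranged in any order. Then M' * (e₁,...,e_m) = M, i.e., inserting the edges of M one after another into M' (in any order) produces M. -/
open SimpleGraph

/-- A simple graph on `Fin n` is a perfect matching if every vertex is
incident with exactly one edge, i.e. has a unique neighbor. -/
def IsPerfMatching {n : ℕ} (M : SimpleGraph (Fin n)) : Prop :=
  ∀ v, ∃! w, M.Adj v w

/-- A simple graph is (i.e. its edges form) a single cycle of length `n`: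
there is a cycle of length `n` passing through all of its edges. -/
def IsCycleGraphOfLength {V : Type*} (G : SimpleGraph V) (n : ℕ) : Prop :=
  ∃ (v : V) (p : G.Walk v v), p.IsCycle ∧ p.length = n ∧ ∀ e ∈ G.edgeSet, e ∈ p.edges

/-- Two perfect matchings are adjacent in the matching graph `𝒫ₘ` iff they are
distinct and their symmetric difference is a cycle of length four. -/
def MatchAdj {n : ℕ} (M₁ M₂ : SimpleGraph (Fin n)) : Prop :=
  M₁ ≠ M₂ ∧ IsCycleGraphOfLength (symmDiff M₁ M₂) 4

/-- Vertices of the graph `𝒫ₘ`: all perfect matchings of `K_{2m}`. -/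
abbrev PMVertex (m : ℕ) := {M : SimpleGraph (Fin (2 * m)) // IsPerfMatching M}

/-- The graph `𝒫ₘ` of perfect matchings of `K_{2m}`. -/
def matchingGraph (m : ℕ) : SimpleGraph (PMVertex m) where
  Adj M₁ M₂ := MatchAdj M₁.1 M₂.1
  symm := ⟨by
    rintro M₁ M₂ ⟨hne, hc⟩
    exact ⟨hne.symm, by rwa [symmDiff_comm]⟩⟩
  loopless := ⟨fun M h => h.1 rfl⟩

/-- The number of geodesics (shortest paths) between two vertices of a graph. -/
noncomputable def geodesicCount {V : Type*} (G : SimpleGraph V) (u v : V) : ℕ :=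
  Nat.card {p : G.Walk u v // p.IsPath ∧ p.length = G.dist u v}
/-- The unique neighbor of `v` in a (perfect) matching `M`
(junk value `v` itself if `v` has no neighbor). -/
noncomputable def matchOf {V : Type*} (M : SimpleGraph V) (v : V) : V := by
  classical
  exact if h : ∃ w, M.Adj v w then h.choose else v

/-- Insertion `M * e` of an edge `e = {v₁, v₂}` into a perfect matching `M`:
if `e ∈ M` then `M * e = M`; otherwise the edges `{v₁, v₃}` and `{v₂, v₄}` of `M`
incident with `v₁` and `v₂` are deleted and the edges `{v₁, v₂}` and `{v₃, v₄}`
are added. -/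
noncomputable def insertEdge {V : Type*} (M : SimpleGraph V) (e : Sym2 V) : SimpleGraph V := by
  classical
  exact if e ∈ M.edgeSet then M
  else SimpleGraph.fromEdgeSet
    ({f | f ∈ M.edgeSet ∧ ∀ v ∈ e, v ∉ f} ∪ {e, Sym2.map (matchOf M) e})

/-- Iterated insertion `M * (e₁, …, eₙ) = (M * (e₁, …, eₙ₋₁)) * eₙ`. -/
noncomputable def insertEdges {V : Type*} (M : SimpleGraph V) (l : List (Sym2 V)) :
    SimpleGraph V :=
  l.foldl insertEdge M

section Aux
variable {V : Type*}

lemma matchOf_adj {N : SimpleGraph V} (hN : ∀ v, ∃! w, N.Adj v w) (v : V) :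
    N.Adj v (matchOf N v) := by
  have h : ∃ w, N.Adj v w := (hN v).exists
  rw [matchOf, dif_pos h]
  exact h.choose_spec

lemma eq_matchOf {N : SimpleGraph V} (hN : ∀ v, ∃! w, N.Adj v w) {v w : V}
    (h : N.Adj v w) : w = matchOf N v :=
  (hN v).unique h (matchOf_adj hN v)

lemma insertEdge_adj' {N : SimpleGraph V} {a b : V}
    (hne : s(a,b) ∉ N.edgeSet) (v w : V) :
    (insertEdge N s(a,b)).Adj v w ↔
      ((N.Adj v w ∧ (a ≠ v ∧ a ≠ w) ∧ (b ≠ v ∧ b ≠ w)) ∨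
       s(v,w) = s(a,b) ∨ s(v,w) = s(matchOf N a, matchOf N b)) ∧ v ≠ w := by
  rw [insertEdge, if_neg hne]
  simp [SimpleGraph.fromEdgeSet_adj, Sym2.mem_iff, Set.mem_setOf_eq, not_or,
    Sym2.map_pair_eq, and_assoc]
  tauto

lemma insertEdge_pm {N : SimpleGraph V} (hN : ∀ v, ∃! w, N.Adj v w)
    {e : Sym2 V} (he : ¬ e.IsDiag) :
    ∀ v, ∃! w, (insertEdge N e).Adj v w := by
  induction e using Sym2.inductionOn with | _ a b =>
  rw [Sym2.isDiag_iff_proj_eq] at he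
  by_cases hmem : s(a,b) ∈ N.edgeSet
  · rw [insertEdge, if_pos hmem]; exact hN
  · set c := matchOf N a with hc
    set d := matchOf N b with hd
    have hac : N.Adj a c := matchOf_adj hN a
    have hbd : N.Adj b d := matchOf_adj hN b
    have hNab : ¬ N.Adj a b := fun h => hmem (by simpa using h)
    have hab : a ≠ b := he
    have hca : a ≠ c := hac.ne
    have hdb : b ≠ d := hbd.ne
    have hcb : c ≠ b := fun h => hNab (h ▸ hac)
    have hda : d ≠ a := fun h => hNab ((h ▸ hbd).symm)
    have hcd : c ≠ d := by
      intro h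
      exact hab ((hN c).unique hac.symm (h ▸ hbd.symm))
    intro v
    simp only [insertEdge_adj' hmem, ← hc, ← hd]
    by_cases hva : v = a
    · subst hva
      refine ⟨b, ⟨Or.inr (Or.inl rfl), hab⟩, ?_⟩
      rintro w ⟨(⟨_, ⟨h1, _⟩, _⟩ | h | h), hvw⟩
      · exact absurd rfl h1
      · rcases Sym2.eq_iff.1 h with ⟨_, rfl⟩ | ⟨h1, _⟩
        · rfl
        · exact absurd h1 hab
      · rcases Sym2.eq_iff.1 h with ⟨h1, _⟩ | ⟨h1, _⟩
        · exact absurd h1 hca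
        · exact absurd h1.symm hda
    · by_cases hvb : v = b
      · subst hvb
        refine ⟨a, ⟨Or.inr (Or.inl (Sym2.eq_swap)), fun h => hab h.symm⟩, ?_⟩
        rintro w ⟨(⟨_, _, ⟨h1, _⟩⟩ | h | h), hvw⟩
        · exact absurd rfl h1
        · rcases Sym2.eq_iff.1 h with ⟨h1, _⟩ | ⟨_, rfl⟩
          · exact absurd h1 (fun h => hab h.symm)
          · rfl
        · rcases Sym2.eq_iff.1 h with ⟨h1, _⟩ | ⟨h1, _⟩
          · exact absurd h1.symm hcb
          · exact absurd h1 hdb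
      · by_cases hvc : v = c
        · subst hvc
          refine ⟨d, ⟨Or.inr (Or.inr rfl), hcd⟩, ?_⟩
          rintro w ⟨(⟨h0, ⟨_, h2⟩, _⟩ | h | h), hvw⟩
          · exact absurd ((hN c).unique h0 hac.symm).symm h2
          · rcases Sym2.eq_iff.1 h with ⟨h1, _⟩ | ⟨h1, _⟩
            · exact absurd h1 (fun h => hca h.symm)
            · exact absurd h1 (fun h => hcb h)
          · rcases Sym2.eq_iff.1 h with ⟨_, rfl⟩ | ⟨h1, _⟩
            · rfl
            · exact absurd h1 hcd
        · by_cases hvd : v = d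
          · subst hvd
            refine ⟨c, ⟨Or.inr (Or.inr Sym2.eq_swap), fun h => hcd h.symm⟩, ?_⟩
            rintro w ⟨(⟨h0, _, ⟨_, h2⟩⟩ | h | h), hvw⟩
            · exact absurd ((hN d).unique h0 hbd.symm).symm h2
            · rcases Sym2.eq_iff.1 h with ⟨h1, _⟩ | ⟨h1, _⟩
              · exact absurd h1 hda
              · exact absurd h1 (fun h => hdb h.symm)
            · rcases Sym2.eq_iff.1 h with ⟨h1, _⟩ | ⟨_, rfl⟩
              · exact absurd h1 (fun h => hcd h.symm)
              · rfl
          · -- generic vertex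
            set w := matchOf N v with hw
            have hvw : N.Adj v w := matchOf_adj hN v
            have hwa : a ≠ w := by
              intro h
              exact hvc (eq_matchOf hN (h ▸ hvw).symm)
            have hwb : b ≠ w := by
              intro h
              exact hvd (eq_matchOf hN (h ▸ hvw).symm)
            refine ⟨w, ⟨Or.inl ⟨hvw, ⟨fun h => hva h.symm, hwa⟩, fun h => hvb h.symm, hwb⟩, hvw.ne⟩, ?_⟩
            rintro w' ⟨(⟨h0, _, _⟩ | h | h), hvw'⟩
            · exact (hN v).unique h0 hvw
            · rcases Sym2.eq_iff.1 h with ⟨h1, _⟩ | ⟨h1, _⟩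
              · exact absurd h1 hva
              · exact absurd h1 hvb
            · rcases Sym2.eq_iff.1 h with ⟨h1, _⟩ | ⟨h1, _⟩
              · exact absurd h1 hvc
              · exact absurd h1 hvd

lemma self_mem_insertEdge {N : SimpleGraph V} {e : Sym2 V} (he : ¬ e.IsDiag) :
    e ∈ (insertEdge N e).edgeSet := by
  by_cases hmem : e ∈ N.edgeSet
  · rwa [insertEdge, if_pos hmem]
  · rw [insertEdge, if_neg hmem, SimpleGraph.edgeSet_fromEdgeSet]
    exact ⟨Or.inr (Or.inl rfl), he⟩

lemma mem_insertEdge_of_disjoint {N : SimpleGraph V} {e f : Sym2 V}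
    (hf : f ∈ N.edgeSet) (hd : ∀ v ∈ e, v ∉ f) :
    f ∈ (insertEdge N e).edgeSet := by
  by_cases hmem : e ∈ N.edgeSet
  · rwa [insertEdge, if_pos hmem]
  · rw [insertEdge, if_neg hmem, SimpleGraph.edgeSet_fromEdgeSet]
    exact ⟨Or.inl ⟨hf, hd⟩, SimpleGraph.not_isDiag_of_mem_edgeSet N hf⟩

lemma mem_insertEdges (l : List (Sym2 V)) :
    ∀ (N : SimpleGraph V) (f : Sym2 V), f ∈ N.edgeSet →
    (∀ e ∈ l, ∀ v ∈ e, v ∉ f) → f ∈ (insertEdges N l).edgeSet := by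
  induction l with
  | nil => exact fun N f hf _ => hf
  | cons e l ih =>
    intro N f hf hd
    exact ih (insertEdge N e)  f
      (mem_insertEdge_of_disjoint hf (hd e List.mem_cons_self))
      (fun e' he' => hd e' (List.mem_cons_of_mem e he'))

lemma insertEdges_pm_and_mem (l : List (Sym2 V)) :
    ∀ (N : SimpleGraph V), (∀ v, ∃! w, N.Adj v w) →
    (∀ e ∈ l, ¬ e.IsDiag) →
    l.Pairwise (fun e f => ∀ v ∈ e, v ∉ f) →
    (∀ v, ∃! w, (insertEdges N l).Adj v w) ∧
      ∀ e ∈ l, e ∈ (insertEdges N l).edgeSet := by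
  induction l with
  | nil => exact fun N hN _ _ => ⟨hN, by simp⟩
  | cons e l ih =>
    intro N hN hdiag hpw
    have he : ¬ e.IsDiag := hdiag e List.mem_cons_self
    have hN' := insertEdge_pm hN he
    obtain ⟨hpm, hmem⟩ := ih (insertEdge N e) hN'
      (fun e' he' => hdiag e' (List.mem_cons_of_mem e he'))
      (List.Pairwise.of_cons hpw)
    refine ⟨hpm, ?_⟩
    intro e' he'
    rcases List.mem_cons.1 he' with heq | he'
    · subst heq
      exact mem_insertEdges l (insertEdge N e') e' (self_mem_insertEdge he)
        (fun f hf v hv hve => (List.pairwise_cons.1 hpw).1 f hf v hve hv)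
    · exact hmem e' he'

lemma pm_eq_of_subset {N M : SimpleGraph V} (hM : ∀ v, ∃! w, M.Adj v w)
    (hN : ∀ v, ∃! w, N.Adj v w) (h : M.edgeSet ⊆ N.edgeSet) : N = M := by
  ext v w
  constructor
  · intro hvw
    have hvm : M.Adj v (matchOf M v) := matchOf_adj hM v
    have : N.Adj v (matchOf M v) := (SimpleGraph.mem_edgeSet N).1 (h hvm)
    rwa [(hN v).unique hvw this]
  · intro hvw
    exact (SimpleGraph.mem_edgeSet N).1 (h hvw)

lemma matching_edges_disjoint {M : SimpleGraph V} (hM : ∀ v, ∃! w, M.Adj v w)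
    {e f : Sym2 V} (he : e ∈ M.edgeSet) (hf : f ∈ M.edgeSet) (hef : e ≠ f) :
    ∀ v ∈ e, v ∉ f := by
  intro v hv hv'
  obtain ⟨x, rfl⟩ := Sym2.mem_iff_exists.1 hv
  obtain ⟨y, rfl⟩ := Sym2.mem_iff_exists.1 hv'
  have hxy : x = y := (hM v).unique ((SimpleGraph.mem_edgeSet M).1 he)
    ((SimpleGraph.mem_edgeSet M).1 hf)
  exact hef (by rw [hxy])

end Aux

/-- Inserting the edges of a perfect matching `M`, in any order, into any
perfect matching `M'` produces `M`. -/
theorem stmt2 (m : ℕ) (M M' : SimpleGraph (Fin (2 * m)))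
    (hM : IsPerfMatching M) (hM' : IsPerfMatching M')
    (l : List (Sym2 (Fin (2 * m)))) (hnd : l.Nodup)
    (hmem : ∀ e, e ∈ l ↔ e ∈ M.edgeSet) :
    insertEdges M' l = M := by
  have hdiag : ∀ e ∈ l, ¬ e.IsDiag :=
    fun e he => SimpleGraph.not_isDiag_of_mem_edgeSet M ((hmem e).1 he)
  have hpw : l.Pairwise (fun e f => ∀ v ∈ e, v ∉ f) := by
    refine List.Pairwise.imp_of_mem ?_ hnd
    intro e f he hf hef
    exact matching_edges_disjoint hM ((hmem e).1 he) ((hmem f).1 hf) hef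
  obtain ⟨hpm, hsub⟩ := insertEdges_pm_and_mem l M' hM' hdiag hpw
  exact pm_eq_of_subset hM hpm (fun e he => hsub e ((hmem e).2 he))
end

section
/- For every m ≥ 1, the graph 𝒫_m of perfect matchings of K_{2m} is connected. -/
open SimpleGraph

def flipGraph {n : ℕ} (M : SimpleGraph (Fin n)) (x y a b : Fin n)
    (hxy : x ≠ y) (hab : a ≠ b) : SimpleGraph (Fin n) where
  Adj u v := (M.Adj u v ∧ ¬(u = x ∨ u = y ∨ u = a ∨ u = b) ∧
      ¬(v = x ∨ v = y ∨ v = a ∨ v = b)) ∨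
    (u = x ∧ v = y) ∨ (u = y ∧ v = x) ∨ (u = a ∧ v = b) ∨ (u = b ∧ v = a)
  symm := ⟨by
    rintro u v (⟨h, hu, hv⟩ | h | h | h | h)
    · exact Or.inl ⟨h.symm, hv, hu⟩
    all_goals tauto⟩
  loopless := ⟨by
    rintro u (⟨h, _, _⟩ | ⟨rfl, h⟩ | ⟨rfl, h⟩ | ⟨rfl, h⟩ | ⟨rfl, h⟩)
    · exact M.ne_of_adj h rfl
    · exact hxy h
    · exact hxy h.symm
    · exact hab h
    · exact hab h.symm⟩

lemma flipGraph_adj {n : ℕ} {M : SimpleGraph (Fin n)} {x y a b : Fin n}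
    {hxy : x ≠ y} {hab : a ≠ b} {u v : Fin n} :
    (flipGraph M x y a b hxy hab).Adj u v ↔
      (M.Adj u v ∧ ¬(u = x ∨ u = y ∨ u = a ∨ u = b) ∧
        ¬(v = x ∨ v = y ∨ v = a ∨ v = b)) ∨
      (u = x ∧ v = y) ∨ (u = y ∧ v = x) ∨ (u = a ∧ v = b) ∨ (u = b ∧ v = a) :=
  Iff.rfl

lemma flip_lemma {n : ℕ} {M : SimpleGraph (Fin n)} (hM : IsPerfMatching M)
    {x y a b : Fin n} (hxa : M.Adj x a) (hyb : M.Adj y b)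
    (hxy : x ≠ y) (hay : a ≠ y) :
    ∃ M' : SimpleGraph (Fin n), IsPerfMatching M' ∧ MatchAdj M M' ∧
      M'.Adj x y ∧
      (∀ u v, u ≠ x → u ≠ y → u ≠ a → u ≠ b → v ≠ x → v ≠ y → v ≠ a → v ≠ b →
        (M'.Adj u v ↔ M.Adj u v)) := by
  -- uniqueness helpers
  have ux : ∀ w, M.Adj x w → w = a := fun w hw => (hM x).unique hw hxa
  have uy : ∀ w, M.Adj y w → w = b := fun w hw => (hM y).unique hw hyb
  have ua : ∀ w, M.Adj a w → w = x := fun w hw => (hM a).unique hw hxa.symm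
  have ub : ∀ w, M.Adj b w → w = y := fun w hw => (hM b).unique hw hyb.symm
  have hax : x ≠ a := M.ne_of_adj hxa
  have hyb' : y ≠ b := M.ne_of_adj hyb
  have hbx : b ≠ x := fun h => hay (ux y (h ▸ hyb).symm).symm
  have hab : a ≠ b := fun h => hxy (ua y (h ▸ hyb).symm).symm
  have hnxy : ¬ M.Adj x y := fun h => hay (ux y h).symm
  have hnab : ¬ M.Adj a b := fun h => hbx (ua b h)
  have hnyx : ¬ M.Adj y x := fun h => hnxy h.symm
  set M' := flipGraph M x y a b hxy hab with hM'def
  have hWxy : M'.Adj x y := Or.inr (Or.inl ⟨rfl, rfl⟩)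
  have hWab : M'.Adj a b := Or.inr (Or.inr (Or.inr (Or.inl ⟨rfl, rfl⟩)))
  have hnWxa : ¬ M'.Adj x a := by
    rintro (⟨h, hu, hv⟩ | ⟨_, h⟩ | ⟨h, _⟩ | ⟨h, _⟩ | ⟨h, _⟩)
    · exact hu (Or.inl rfl)
    · exact hay h
    · exact hxy h
    · exact hax h
    · exact hbx h.symm
  have hnWby : ¬ M'.Adj b y := by
    rintro (⟨h, hu, hv⟩ | ⟨h, _⟩ | ⟨h, _⟩ | ⟨h, _⟩ | ⟨_, h⟩)
    · exact hu (Or.inr (Or.inr (Or.inr rfl)))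
    · exact hbx h
    · exact hyb' h.symm
    · exact hab h.symm
    · exact hay h.symm
  have hPM' : IsPerfMatching M' := by
    intro v
    by_cases hvx : v = x
    · subst hvx
      refine ⟨y, hWxy, ?_⟩
      rintro w (⟨h, hu, hv⟩ | ⟨_, rfl⟩ | ⟨h, _⟩ | ⟨h, _⟩ | ⟨h, _⟩)
      · exact absurd (Or.inl rfl) hu
      · rfl
      · exact absurd h hxy
      · exact absurd h hax
      · exact absurd h.symm hbx
    by_cases hvy : v = y
    · subst hvy
      refine ⟨x, hWxy.symm, ?_⟩
      rintro w (⟨h, hu, hv⟩ | ⟨h, _⟩ | ⟨_, rfl⟩ | ⟨h, _⟩ | ⟨h, _⟩)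
      · exact absurd (Or.inr (Or.inl rfl)) hu
      · exact absurd h.symm hxy
      · rfl
      · exact absurd h.symm hay
      · exact absurd h hyb'
    by_cases hva : v = a
    · subst hva
      refine ⟨b, hWab, ?_⟩
      rintro w (⟨h, hu, hv⟩ | ⟨h, _⟩ | ⟨h, _⟩ | ⟨_, rfl⟩ | ⟨h, _⟩)
      · exact absurd (Or.inr (Or.inr (Or.inl rfl))) hu
      · exact absurd h.symm hax
      · exact absurd h hay
      · rfl
      · exact absurd h hab
    by_cases hvb : v = b
    · subst hvb
      refine ⟨a, hWab.symm, ?_⟩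
      rintro w (⟨h, hu, hv⟩ | ⟨h, _⟩ | ⟨h, _⟩ | ⟨h, _⟩ | ⟨_, rfl⟩)
      · exact absurd (Or.inr (Or.inr (Or.inr rfl))) hu
      · exact absurd h hbx
      · exact absurd h.symm hyb'
      · exact absurd h.symm hab
      · rfl
    · obtain ⟨w, hw, huw⟩ := hM v
      have hwx : w ≠ x := fun h => hva (ux v (h ▸ hw).symm)
      have hwy : w ≠ y := fun h => hvb (uy v (h ▸ hw).symm)
      have hwa : w ≠ a := fun h => hvx (ua v (h ▸ hw).symm)
      have hwb : w ≠ b := fun h => hvy (ub v (h ▸ hw).symm)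
      refine ⟨w, Or.inl ⟨hw, by tauto, by tauto⟩, ?_⟩
      rintro z (⟨h, hu, hv⟩ | ⟨h, _⟩ | ⟨h, _⟩ | ⟨h, _⟩ | ⟨h, _⟩)
      · exact huw z h
      all_goals tauto
  refine ⟨M', hPM', ⟨?_, ?_⟩, hWxy, ?_⟩
  · -- M ≠ M'
    intro h
    exact hnWxa (h ▸ hxa)
  · -- cycle of length 4
    set G := symmDiff M M' with hGdef
    have hG : ∀ u v, G.Adj u v ↔ (M.Adj u v ∧ ¬ M'.Adj u v) ∨ (M'.Adj u v ∧ ¬ M.Adj u v) := by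
      intro u v
      rw [hGdef, symmDiff_def]
      simp [sup_adj, sdiff_adj]
    have e1 : G.Adj x a := (hG x a).2 (Or.inl ⟨hxa, hnWxa⟩)
    have e2 : G.Adj a b := (hG a b).2 (Or.inr ⟨hWab, hnab⟩)
    have e3 : G.Adj b y := (hG b y).2 (Or.inl ⟨hyb.symm, hnWby⟩)
    have e4 : G.Adj y x := (hG y x).2 (Or.inr ⟨hWxy.symm, hnyx⟩)
    refine ⟨x, Walk.cons e1 (Walk.cons e2 (Walk.cons e3 (Walk.cons e4 Walk.nil))), ?_, by simp, ?_⟩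
    · rw [Walk.isCycle_def]
      refine ⟨?_, by simp, ?_⟩
      · rw [Walk.isTrail_def]
        simp only [Walk.edges_cons, Walk.edges_nil, List.nodup_cons, List.mem_cons,
          List.not_mem_nil, or_false, List.nodup_nil, and_true, Sym2.eq_iff]
        push_neg
        refine ⟨⟨?_, ?_, ?_⟩, ⟨?_, ?_⟩, ?_⟩ <;> tauto
      · simp only [Walk.support_cons, Walk.support_nil, List.tail_cons, List.nodup_cons,
          List.mem_cons, List.not_mem_nil, or_false, List.nodup_nil, and_true]
        refine ⟨?_, ?_, ?_⟩ <;> tauto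
    · intro e he
      revert he
      refine e.ind ?_
      intro u v he
      rw [mem_edgeSet] at he
      simp only [Walk.edges_cons, Walk.edges_nil, List.mem_cons, List.not_mem_nil, or_false]
      rw [hG] at he
      have key : (u = x ∧ v = a) ∨ (u = a ∧ v = x) ∨ (u = y ∧ v = b) ∨ (u = b ∧ v = y) ∨
          (u = x ∧ v = y) ∨ (u = y ∧ v = x) ∨ (u = a ∧ v = b) ∨ (u = b ∧ v = a) := by
        rcases he with ⟨h, hn⟩ | ⟨h, hn⟩
        · -- an M-edge not in M'
          by_cases hu : u = x ∨ u = y ∨ u = a ∨ u = b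
          · rcases hu with rfl | rfl | rfl | rfl
            · exact Or.inl ⟨rfl, ux v h⟩
            · exact Or.inr (Or.inr (Or.inl ⟨rfl, uy v h⟩))
            · exact Or.inr (Or.inl ⟨rfl, ua v h⟩)
            · exact Or.inr (Or.inr (Or.inr (Or.inl ⟨rfl, ub v h⟩)))
          · exfalso
            have hv : ¬(v = x ∨ v = y ∨ v = a ∨ v = b) := by
              rintro (rfl | rfl | rfl | rfl)
              · exact hu (Or.inr (Or.inr (Or.inl (ux u h.symm))))
              · exact hu (Or.inr (Or.inr (Or.inr (uy u h.symm))))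
              · exact hu (Or.inl (ua u h.symm))
              · exact hu (Or.inr (Or.inl (ub u h.symm)))
            exact hn (Or.inl ⟨h, hu, hv⟩)
        · rcases h with ⟨h, _, _⟩ | h | h | h | h
          · exact absurd h hn
          · exact Or.inr (Or.inr (Or.inr (Or.inr (Or.inl h))))
          · exact Or.inr (Or.inr (Or.inr (Or.inr (Or.inr (Or.inl h)))))
          · exact Or.inr (Or.inr (Or.inr (Or.inr (Or.inr (Or.inr (Or.inl h))))))
          · exact Or.inr (Or.inr (Or.inr (Or.inr (Or.inr (Or.inr (Or.inr h))))))
      rcases key with ⟨rfl, rfl⟩ | ⟨rfl, rfl⟩ | ⟨rfl, rfl⟩ | ⟨rfl, rfl⟩ | ⟨rfl, rfl⟩ | ⟨rfl, rfl⟩ | ⟨rfl, rfl⟩ | ⟨rfl, rfl⟩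
      · exact Or.inl rfl
      · exact Or.inl Sym2.eq_swap
      · exact Or.inr (Or.inr (Or.inl Sym2.eq_swap))
      · exact Or.inr (Or.inr (Or.inl rfl))
      · exact Or.inr (Or.inr (Or.inr Sym2.eq_swap))
      · exact Or.inr (Or.inr (Or.inr rfl))
      · exact Or.inr (Or.inl rfl)
      · exact Or.inr (Or.inl Sym2.eq_swap)
  · intro u v h1 h2 h3 h4 h5 h6 h7 h8
    constructor
    · rintro (⟨h, _, _⟩ | ⟨rfl, _⟩ | ⟨rfl, _⟩ | ⟨rfl, _⟩ | ⟨rfl, _⟩)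
      · exact h
      all_goals tauto
    · intro h
      exact Or.inl ⟨h, by tauto, by tauto⟩

def canonM (m : ℕ) : SimpleGraph (Fin (2*m)) where
  Adj u v := u.val ≠ v.val ∧ u.val / 2 = v.val / 2
  symm := ⟨fun u v ⟨h1, h2⟩ => ⟨h1.symm, h2.symm⟩⟩
  loopless := ⟨fun u h => h.1 rfl⟩

lemma canonM_adj {m : ℕ} {u v : Fin (2*m)} :
    (canonM m).Adj u v ↔ u.val ≠ v.val ∧ u.val / 2 = v.val / 2 := Iff.rfl

lemma canonM_pm (m : ℕ) : IsPerfMatching (canonM m) := by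
  intro v
  have hv := v.isLt
  refine ⟨⟨2*(v.val/2) + 1 - v.val % 2, by omega⟩, ⟨by simp; omega, by simp; omega⟩, ?_⟩
  rintro w ⟨h1, h2⟩
  have hw := w.isLt
  apply Fin.ext
  simp only []
  omega

def vA {m : ℕ} (i : Fin m) : Fin (2*m) := ⟨2*i.val, by have := i.isLt; omega⟩
def vB {m : ℕ} (i : Fin m) : Fin (2*m) := ⟨2*i.val+1, by have := i.isLt; omega⟩

lemma eq_canonM {m : ℕ} {M : SimpleGraph (Fin (2*m))} (hM : IsPerfMatching M)
    (hall : ∀ i : Fin m, M.Adj (vA i) (vB i)) : M = canonM m := by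
  ext u v
  have hu := u.isLt
  have hv := v.isLt
  constructor
  · intro h
    set i : Fin m := ⟨u.val/2, by omega⟩ with hidef
    have hp := hall i
    have hAv : (vA i).val = 2*(u.val/2) := rfl
    have hBv : (vB i).val = 2*(u.val/2)+1 := rfl
    by_cases hpar : u.val % 2 = 0
    · have huA : u = vA i := by apply Fin.ext; omega
      have hv' : v = vB i := (hM u).unique h (by rw [huA]; exact hp)
      have hv2 : v.val = (vB i).val := by rw [hv']
      rw [canonM_adj]
      exact ⟨by omega, by omega⟩
    · have huB : u = vB i := by apply Fin.ext; omega
      have hv' : v = vA i := (hM u).unique h (by rw [huB]; exact hp.symm)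
      have hv2 : v.val = (vA i).val := by rw [hv']
      rw [canonM_adj]
      exact ⟨by omega, by omega⟩
  · rintro ⟨h1, h2⟩
    set i : Fin m := ⟨u.val/2, by omega⟩ with hidef
    have hp := hall i
    have hAv : (vA i).val = 2*(u.val/2) := rfl
    have hBv : (vB i).val = 2*(u.val/2)+1 := rfl
    by_cases hpar : u.val % 2 = 0
    · have huA : u = vA i := by apply Fin.ext; omega
      have hvB : v = vB i := by apply Fin.ext; omega
      rw [huA, hvB]; exact hp
    · have huB : u = vB i := by apply Fin.ext; omega
      have hvA : v = vA i := by apply Fin.ext; omega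
      rw [huB, hvA]; exact hp.symm

/-- The graph `𝒫ₘ` of perfect matchings of `K_{2m}` is connected. -/
theorem stmt3 (m : ℕ) (hm : 1 ≤ m) : (matchingGraph m).Connected := by
  classical
  have hcanon : IsPerfMatching (canonM m) := canonM_pm m
  let M₀ : PMVertex m := ⟨canonM m, hcanon⟩
  have key : ∀ (k : ℕ) (M : PMVertex m),
      (Finset.univ.filter fun i : Fin m => ¬ M.1.Adj (vA i) (vB i)).card ≤ k →
      (matchingGraph m).Reachable M M₀ := by
    intro k
    induction k with
    | zero =>
      intro M hle
      have hall : ∀ i : Fin m, M.1.Adj (vA i) (vB i) := by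
        intro i
        by_contra hni
        have hmem : i ∈ Finset.univ.filter fun i : Fin m => ¬ M.1.Adj (vA i) (vB i) :=
          Finset.mem_filter.2 ⟨Finset.mem_univ _, hni⟩
        have := Finset.card_pos.2 ⟨i, hmem⟩
        omega
      have hMe : M = M₀ := Subtype.ext (eq_canonM M.2 hall)
      rw [hMe]
    | succ k ih =>
      intro M hle
      by_cases hz : ∀ i : Fin m, M.1.Adj (vA i) (vB i)
      · have hMe : M = M₀ := Subtype.ext (eq_canonM M.2 hz)
        rw [hMe]
      · push_neg at hz
        obtain ⟨i, hi⟩ := hz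
        obtain ⟨a, hxa, -⟩ := M.2 (vA i)
        obtain ⟨b, hyb, -⟩ := M.2 (vB i)
        have hAi : (vA i).val = 2*i.val := rfl
        have hBi : (vB i).val = 2*i.val+1 := rfl
        have hxy : vA i ≠ vB i := by
          intro h; have h2 := congrArg Fin.val h; omega
        have hay : a ≠ vB i := by rintro rfl; exact hi hxa
        obtain ⟨M', hPM', hMadj, hM'xy, hagree⟩ := flip_lemma M.2 hxa hyb hxy hay
        have hadjG : (matchingGraph m).Adj M ⟨M', hPM'⟩ := hMadj
        have hsub : (Finset.univ.filter fun j : Fin m => ¬ M'.Adj (vA j) (vB j)) ⊂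
            (Finset.univ.filter fun j : Fin m => ¬ M.1.Adj (vA j) (vB j)) := by
          rw [Finset.ssubset_def]
          constructor
          · intro j hj
            simp only [Finset.mem_filter, Finset.mem_univ, true_and] at hj ⊢
            intro hMj
            apply hj
            have hji : j ≠ i := by rintro rfl; exact hi hMj
            have hjiv : j.val ≠ i.val := fun h => hji (Fin.ext h)
            have hAj : (vA j).val = 2*j.val := rfl
            have hBj : (vB j).val = 2*j.val+1 := rfl
            have d1 : vA j ≠ vA i := by
              intro h; have h2 := congrArg Fin.val h; omega
            have d2 : vA j ≠ vB i := by
              intro h; have h2 := congrArg Fin.val h; omega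
            have d3 : vA j ≠ a := by
              intro h
              have h2 : M.1.Adj (vA j) (vA i) := by rw [h]; exact hxa.symm
              have h3 := (M.2 (vA j)).unique h2 hMj
              have h4 := congrArg Fin.val h3
              omega
            have d4 : vA j ≠ b := by
              intro h
              have h2 : M.1.Adj (vA j) (vB i) := by rw [h]; exact hyb.symm
              have h3 := (M.2 (vA j)).unique h2 hMj
              have h4 := congrArg Fin.val h3
              omega
            have d5 : vB j ≠ vA i := by
              intro h; have h2 := congrArg Fin.val h; omega
            have d6 : vB j ≠ vB i := by
              intro h; have h2 := congrArg Fin.val h; omega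
            have d7 : vB j ≠ a := by
              intro h
              have h2 : M.1.Adj (vB j) (vA i) := by rw [h]; exact hxa.symm
              have h3 := (M.2 (vB j)).unique h2 hMj.symm
              have h4 := congrArg Fin.val h3
              omega
            have d8 : vB j ≠ b := by
              intro h
              have h2 : M.1.Adj (vB j) (vB i) := by rw [h]; exact hyb.symm
              have h3 := (M.2 (vB j)).unique h2 hMj.symm
              have h4 := congrArg Fin.val h3
              omega
            exact (hagree (vA j) (vB j) d1 d2 d3 d4 d5 d6 d7 d8).2 hMj
          · intro hsub'
            have hmem := hsub' (Finset.mem_filter.2 ⟨Finset.mem_univ _, hi⟩)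
            exact (Finset.mem_filter.1 hmem).2 hM'xy
        have hlt := Finset.card_lt_card hsub
        have hle' : (Finset.univ.filter fun j : Fin m => ¬ M'.Adj (vA j) (vB j)).card ≤ k := by
          omega
        exact (hadjG.reachable).trans (ih ⟨M', hPM'⟩ hle')
  rw [connected_iff]
  exact ⟨fun A B => (key _ A le_rfl).trans (key _ B le_rfl).symm, ⟨M₀⟩⟩
end

section
/- Let M₁ and M₂ be perfect matchings of K_{2m} and let l be the number of connected components of the graph M₁ ∪ M₂. Then the distance between M₁ and M₂ in the graph 𝒫_m is d(M₁,M₂) = m - l. -/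
set_option maxHeartbeats 1000000

open SimpleGraph

/-! ### Auxiliary machinery -/

section Aux
variable {V : Type*}

/-- Walks stay in an adjacency-closed set. -/
lemma pm_walk_mem_closed {G : SimpleGraph V} {s : Set V}
    (hcl : ∀ x y, x ∈ s → G.Adj x y → y ∈ s) {u v : V} (hu : u ∈ s) (w : G.Walk u v) :
    v ∈ s := by
  induction w with
  | nil => exact hu
  | cons h w ih => exact ih (hcl _ _ hu h)

/-- The partner function of a perfect matching. -/
noncomputable def pmPtr {M : SimpleGraph V} (h : ∀ v, ∃! w, M.Adj v w) (v : V) : V :=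
  (h v).choose

lemma pmPtr_adj {M : SimpleGraph V} (h : ∀ v, ∃! w, M.Adj v w) (v : V) :
    M.Adj v (pmPtr h v) := (h v).choose_spec.1

lemma pm_adj_iff {M : SimpleGraph V} (h : ∀ v, ∃! w, M.Adj v w) {v w : V} :
    M.Adj v w ↔ pmPtr h v = w :=
  ⟨fun hw => ((h v).choose_spec.2 w hw).symm, fun e => e ▸ pmPtr_adj h v⟩

lemma pmPtr_invol {M : SimpleGraph V} (h : ∀ v, ∃! w, M.Adj v w) (v : V) :
    pmPtr h (pmPtr h v) = v :=
  (pm_adj_iff h).mp ((pmPtr_adj h v).symm)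

lemma pmPtr_ne {M : SimpleGraph V} (h : ∀ v, ∃! w, M.Adj v w) (v : V) :
    pmPtr h v ≠ v := (M.ne_of_adj (pmPtr_adj h v)).symm

/-- a component avoids a set -/
def pmAvoids (G : SimpleGraph V) (S : Set V) (c : G.ConnectedComponent) : Prop :=
  ∀ v, G.connectedComponentMk v = c → v ∉ S

lemma pm_not_avoids_iff {G : SimpleGraph V} {S : Set V} {c : G.ConnectedComponent} :
    ¬ pmAvoids G S c ↔ ∃ v, G.connectedComponentMk v = c ∧ v ∈ S := by
  unfold pmAvoids; push_neg; rfl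

lemma pm_mk_out {G : SimpleGraph V} (c : G.ConnectedComponent) :
    G.connectedComponentMk c.out = c := c.out_eq

lemma pm_mk_eq_of_adj {G : SimpleGraph V} {v w : V} (h : G.Adj v w) :
    G.connectedComponentMk v = G.connectedComponentMk w :=
  ConnectedComponent.sound h.reachable

section transfer
variable {G G' : SimpleGraph V} {S : Set V}

lemma pm_transfer_walk (h1 : ∀ x y, x ∉ S → (G.Adj x y ↔ G'.Adj x y))
    {u v : V} (w : G.Walk u v) (hu : ∀ z, G.Reachable u z → z ∉ S) :
    G'.Reachable u v := by
  induction w with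
  | nil => exact Reachable.refl _
  | @cons a b c h w ih =>
    have hb : G'.Adj a b := (h1 a b (hu a (Reachable.refl a))).mp h
    have : ∀ z, G.Reachable b z → z ∉ S := fun z hz => hu z (h.reachable.trans hz)
    exact (hb.reachable).trans (ih this)

lemma pm_transfer_walk_back (h1 : ∀ x y, x ∉ S → (G.Adj x y ↔ G'.Adj x y))
    {u v : V} (w : G'.Walk u v) (hu : ∀ z, G.Reachable u z → z ∉ S) :
    G.Reachable u v := by
  induction w with
  | nil => exact Reachable.refl _
  | @cons a b c h w ih =>
    have hab : G.Adj a b := (h1 a b (hu a (Reachable.refl a))).mpr h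
    have hb : ∀ z, G.Reachable b z → z ∉ S := fun z hz => hu z (hab.reachable.trans hz)
    exact hab.reachable.trans (ih hb)

lemma pm_transfer_comp (h1 : ∀ x y, x ∉ S → (G.Adj x y ↔ G'.Adj x y))
    {u : V} (hu : ∀ z, G.Reachable u z → z ∉ S) :
    (∀ z, G'.Reachable u z → z ∉ S) ∧ ∀ v, (G.Reachable u v ↔ G'.Reachable u v) := by
  constructor
  · intro z hz
    obtain ⟨w⟩ := hz
    exact hu z (pm_transfer_walk_back h1 w hu)
  · intro v
    constructor
    · intro ⟨w⟩; exact pm_transfer_walk h1 w hu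
    · intro ⟨w⟩; exact pm_transfer_walk_back h1 w hu

lemma pm_avoids_rep {c : G.ConnectedComponent} (hc : pmAvoids G S c) :
    ∀ z, G.Reachable c.out z → z ∉ S := by
  intro z hz
  refine hc z ?_
  rw [← pm_mk_out c]
  exact (ConnectedComponent.eq).mpr hz.symm

lemma pm_card_avoids_eq [Finite V] (h1 : ∀ x y, x ∉ S → (G.Adj x y ↔ G'.Adj x y)) :
    Nat.card {c : G.ConnectedComponent // pmAvoids G S c}
      = Nat.card {c : G'.ConnectedComponent // pmAvoids G' S c} := by
  have h1' : ∀ x y, x ∉ S → (G'.Adj x y ↔ G.Adj x y) := fun x y hx => (h1 x y hx).symm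
  have key : ∀ (c : G.ConnectedComponent) (hc : pmAvoids G S c),
      pmAvoids G' S (G'.connectedComponentMk c.out) ∧
      ∀ v, (G'.connectedComponentMk v = G'.connectedComponentMk c.out ↔
        G.connectedComponentMk v = c) := by
    intro c hc
    have hu := pm_avoids_rep hc
    obtain ⟨hu', hiff⟩ := pm_transfer_comp h1 hu
    constructor
    · intro v hv
      exact hu' v ((ConnectedComponent.eq).mp hv).symm
    · intro v
      rw [ConnectedComponent.eq]
      constructor
      · intro hr
        have := (hiff v).mpr hr.symm
        rw [← pm_mk_out c, ConnectedComponent.eq]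
        exact this.symm
      · intro hr
        have : G.Reachable c.out v := by
          rw [← ConnectedComponent.eq, pm_mk_out c]; exact hr.symm
        exact ((hiff v).mp this).symm
  have key' : ∀ (c : G'.ConnectedComponent) (hc : pmAvoids G' S c),
      pmAvoids G S (G.connectedComponentMk c.out) ∧
      ∀ v, (G.connectedComponentMk v = G.connectedComponentMk c.out ↔
        G'.connectedComponentMk v = c) := by
    intro c hc
    have hu := pm_avoids_rep hc
    obtain ⟨hu', hiff⟩ := pm_transfer_comp h1' hu
    constructor
    · intro v hv
      exact hu' v ((ConnectedComponent.eq).mp hv).symm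
    · intro v
      rw [ConnectedComponent.eq]
      constructor
      · intro hr
        have := (hiff v).mpr hr.symm
        rw [← pm_mk_out c, ConnectedComponent.eq]
        exact this.symm
      · intro hr
        have : G'.Reachable c.out v := by
          rw [← ConnectedComponent.eq, pm_mk_out c]; exact hr.symm
        exact ((hiff v).mp this).symm
  refine Nat.card_congr (Equiv.mk
    (fun c => ⟨G'.connectedComponentMk c.1.out, (key c.1 c.2).1⟩)
    (fun c => ⟨G.connectedComponentMk c.1.out, (key' c.1 c.2).1⟩) ?_ ?_)
  · rintro ⟨c, hc⟩
    apply Subtype.ext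
    simp only
    set c' := G'.connectedComponentMk c.out with hc'
    have h2 := ((key c hc).2 c'.out)
    rw [pm_mk_out c'] at h2
    exact h2.mp rfl
  · rintro ⟨c, hc⟩
    apply Subtype.ext
    simp only
    set c' := G.connectedComponentMk c.out with hc'
    have h2 := ((key' c hc).2 c'.out)
    rw [pm_mk_out c'] at h2
    exact h2.mp rfl

end transfer

lemma pm_card_split {α : Type*} [Finite α] (p : α → Prop) :
    Nat.card α = Nat.card {x // p x} + Nat.card {x // ¬ p x} := by
  classical
  rw [← Nat.card_sum]
  exact Nat.card_congr (Equiv.sumCompl p).symm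

section L1
variable [Finite V] {G G' : SimpleGraph V} {a b c d : V}

lemma pm_L1 (h1 : ∀ x y, x ∉ ({a,b,c,d} : Set V) → (G.Adj x y ↔ G'.Adj x y))
    (hab : G.Adj a b) (hcd : G.Adj c d) :
    Nat.card G.ConnectedComponent ≤ Nat.card G'.ConnectedComponent + 1 := by
  classical
  set S : Set V := {a, b, c, d} with hS
  have hsplit := pm_card_split (pmAvoids G S)
  have hsplit' := pm_card_split (pmAvoids G' S)
  have heq := pm_card_avoids_eq (G := G) (G' := G') h1
  have hrep : ∀ x : {c : G.ConnectedComponent // ¬ pmAvoids G S c},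
      x.1 = G.connectedComponentMk a ∨ x.1 = G.connectedComponentMk c := by
    rintro ⟨c0, hc0⟩
    obtain ⟨v, hv, hvS⟩ := pm_not_avoids_iff.mp hc0
    simp only [hS, Set.mem_insert_iff, Set.mem_singleton_iff] at hvS
    show c0 = G.connectedComponentMk a ∨ c0 = G.connectedComponentMk c
    rcases hvS with rfl | rfl | rfl | rfl
    · left; exact hv.symm
    · left; rw [← hv]; exact pm_mk_eq_of_adj hab.symm
    · right; exact hv.symm
    · right; rw [← hv]; exact pm_mk_eq_of_adj hcd.symm
  have hNP : Nat.card {c : G.ConnectedComponent // ¬ pmAvoids G S c} ≤ 2 := by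
    have hinj : Function.Injective
        (fun x : {c : G.ConnectedComponent // ¬ pmAvoids G S c} =>
          (if x.1 = G.connectedComponentMk a then true else false)) := by
      intro x y hxy
      simp only at hxy
      split_ifs at hxy with h1x h2x h2x
      · exact Subtype.ext (h1x.trans h2x.symm)
      · exact Subtype.ext (((hrep x).resolve_left h1x).trans
          (((hrep y).resolve_left h2x).symm))
    calc Nat.card {c : G.ConnectedComponent // ¬ pmAvoids G S c}
        ≤ Nat.card Bool := Nat.card_le_card_of_injective _ hinj
      _ = 2 := by simp [Nat.card_eq_fintype_card]
  have hNP' : 1 ≤ Nat.card {c : G'.ConnectedComponent // ¬ pmAvoids G' S c} := by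
    have : Nonempty {c : G'.ConnectedComponent // ¬ pmAvoids G' S c} :=
      ⟨⟨G'.connectedComponentMk a, pm_not_avoids_iff.mpr ⟨a, rfl, by simp [hS]⟩⟩⟩
    exact Nat.card_pos
  omega

lemma pm_L1' (h1 : ∀ x y, x ∉ ({a,b,c,d} : Set V) → (G.Adj x y ↔ G'.Adj x y))
    (hba : b ≠ a) (hbd : b ≠ d)
    (hab : G.Adj a b) (had : G.Adj a d) (hdc : G.Adj d c)
    (ha' : ∀ y, G'.Adj a y → y = d) (hd' : ∀ y, G'.Adj d y → y = a) :
    Nat.card G.ConnectedComponent + 1 ≤ Nat.card G'.ConnectedComponent := by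
  classical
  set S : Set V := {a, b, c, d} with hS
  have hsplit := pm_card_split (pmAvoids G S)
  have hsplit' := pm_card_split (pmAvoids G' S)
  have heq := pm_card_avoids_eq (G := G) (G' := G') h1
  have hrep : ∀ x : {c : G.ConnectedComponent // ¬ pmAvoids G S c},
      x.1 = G.connectedComponentMk a := by
    rintro ⟨c0, hc0⟩
    obtain ⟨v, hv, hvS⟩ := pm_not_avoids_iff.mp hc0
    simp only [hS, Set.mem_insert_iff, Set.mem_singleton_iff] at hvS
    have hmkd : G.connectedComponentMk d = G.connectedComponentMk a :=
      pm_mk_eq_of_adj had.symm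
    show c0 = G.connectedComponentMk a
    rcases hvS with rfl | rfl | rfl | rfl
    · exact hv.symm
    · rw [← hv]; exact pm_mk_eq_of_adj hab.symm
    · rw [← hv]
      exact (pm_mk_eq_of_adj hdc.symm).trans hmkd
    · rw [← hv]; exact hmkd
  have hNP : Nat.card {c : G.ConnectedComponent // ¬ pmAvoids G S c} = 1 := by
    rw [Nat.card_eq_one_iff_unique]
    constructor
    · exact ⟨fun x y => Subtype.ext ((hrep x).trans (hrep y).symm)⟩
    · exact ⟨⟨G.connectedComponentMk a, pm_not_avoids_iff.mpr ⟨a, rfl, by simp [hS]⟩⟩⟩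
  have hne : G'.connectedComponentMk a ≠ G'.connectedComponentMk b := by
    intro h
    have hr : G'.Reachable a b := ConnectedComponent.eq.mp h
    obtain ⟨w⟩ := hr
    have hcl : ∀ x y, x ∈ ({a, d} : Set V) → G'.Adj x y → y ∈ ({a, d} : Set V) := by
      rintro x y hx hxy
      rcases hx with rfl | rfl
      · right; exact (ha' y hxy) ▸ rfl
      · left; exact (hd' y hxy) ▸ rfl
    have := pm_walk_mem_closed hcl (by simp) w
    rcases this with h | h
    · exact hba h
    · exact hbd h
  have hNP' : 2 ≤ Nat.card {c : G'.ConnectedComponent // ¬ pmAvoids G' S c} := by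
    have : Nontrivial {c : G'.ConnectedComponent // ¬ pmAvoids G' S c} :=
      ⟨⟨⟨G'.connectedComponentMk a, pm_not_avoids_iff.mpr ⟨a, rfl, by simp [hS]⟩⟩,
        ⟨G'.connectedComponentMk b, pm_not_avoids_iff.mpr ⟨b, rfl, by simp [hS]⟩⟩,
        fun h => hne (congrArg Subtype.val h)⟩⟩
    exact Finite.one_lt_card
  omega
end L1

/-- card of V as a sum over components of fiber cards. -/
lemma pm_card_eq_sum_fibers [Finite V] (G : SimpleGraph V) :
    Nat.card V = ∑ᶠ c : G.ConnectedComponent,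
      Nat.card {v : V // G.connectedComponentMk v = c} := by
  classical
  cases nonempty_fintype V
  haveI : Fintype G.ConnectedComponent := Fintype.ofFinite _
  rw [finsum_eq_sum_of_fintype]
  haveI : ∀ c : G.ConnectedComponent, Fintype {v : V // G.connectedComponentMk v = c} :=
    fun c => Fintype.ofFinite _
  have h1 : Nat.card V
      = Nat.card ((c : G.ConnectedComponent) × {v : V // G.connectedComponentMk v = c}) :=
    Nat.card_congr (Equiv.sigmaFiberEquiv (G.connectedComponentMk)).symm
  rw [h1, Nat.card_eq_fintype_card, Fintype.card_sigma]
  exact Finset.sum_congr rfl fun c _ => (Nat.card_eq_fintype_card).symm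

lemma pm_matching_reach {M : SimpleGraph V} (h : ∀ v, ∃! w, M.Adj v w) {u v : V} :
    M.Reachable u v ↔ v = u ∨ v = pmPtr h u := by
  constructor
  · rintro ⟨w⟩
    have hcl : ∀ x y, x ∈ ({u, pmPtr h u} : Set V) → M.Adj x y →
        y ∈ ({u, pmPtr h u} : Set V) := by
      rintro x y (rfl | rfl) hxy
      · right; exact ((pm_adj_iff h).mp hxy).symm
      · left; rw [← pmPtr_invol h u]; exact ((pm_adj_iff h).mp hxy).symm
    have := pm_walk_mem_closed hcl (by simp) w
    simpa using this
  · rintro (rfl | rfl)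
    · exact Reachable.refl _
    · exact (pmPtr_adj h u).reachable

lemma pm_matching_eq_of_ptr_eq {A B : SimpleGraph V} (hA : ∀ v, ∃! w, A.Adj v w)
    (hB : ∀ v, ∃! w, B.Adj v w) (h : ∀ u, pmPtr hA u = pmPtr hB u) : A = B := by
  ext x y
  rw [pm_adj_iff hA, pm_adj_iff hB, h]

section fibers
variable [Finite V] {A B : SimpleGraph V}

lemma pm_two_le_fiber (hA : ∀ v, ∃! w, A.Adj v w) (c : (A ⊔ B).ConnectedComponent) :
    2 ≤ Nat.card {v : V // (A ⊔ B).connectedComponentMk v = c} := by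
  induction c using ConnectedComponent.ind with
  | _ u =>
    have hadj : (A ⊔ B).Adj u (pmPtr hA u) := Or.inl (pmPtr_adj hA u)
    have : Nontrivial {v : V // (A ⊔ B).connectedComponentMk v
        = (A ⊔ B).connectedComponentMk u} :=
      ⟨⟨u, rfl⟩, ⟨pmPtr hA u, (ConnectedComponent.sound hadj.reachable).symm⟩,
        fun hx => pmPtr_ne hA u (congrArg Subtype.val hx).symm⟩
    exact Finite.one_lt_card

lemma pm_three_le_fiber (hA : ∀ v, ∃! w, A.Adj v w) (hB : ∀ v, ∃! w, B.Adj v w)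
    {u : V} (hu : pmPtr hA u ≠ pmPtr hB u) :
    3 ≤ Nat.card {v : V // (A ⊔ B).connectedComponentMk v
      = (A ⊔ B).connectedComponentMk u} := by
  have hadjA : (A ⊔ B).Adj u (pmPtr hA u) := Or.inl (pmPtr_adj hA u)
  have hadjB : (A ⊔ B).Adj u (pmPtr hB u) := Or.inr (pmPtr_adj hB u)
  have e1 : (A ⊔ B).connectedComponentMk (pmPtr hA u) = (A ⊔ B).connectedComponentMk u :=
    (ConnectedComponent.sound hadjA.reachable).symm
  have e2 : (A ⊔ B).connectedComponentMk (pmPtr hB u) = (A ⊔ B).connectedComponentMk u :=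
    (ConnectedComponent.sound hadjB.reachable).symm
  have hsub : ({u, pmPtr hA u, pmPtr hB u} : Set V)
      ⊆ {v : V | (A ⊔ B).connectedComponentMk v = (A ⊔ B).connectedComponentMk u} := by
    rintro v (rfl | rfl | rfl)
    · exact rfl
    · exact e1
    · exact e2
  have h3 : ({u, pmPtr hA u, pmPtr hB u} : Set V).ncard = 3 := by
    rw [Set.ncard_insert_of_notMem (by
      rintro (h | h)
      · exact pmPtr_ne hA u h.symm
      · exact pmPtr_ne hB u h.symm) (Set.toFinite _),
      Set.ncard_pair hu]
  calc (3:ℕ) = ({u, pmPtr hA u, pmPtr hB u} : Set V).ncard := h3.symm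
    _ ≤ ({v : V | (A ⊔ B).connectedComponentMk v = (A ⊔ B).connectedComponentMk u}).ncard :=
        Set.ncard_le_ncard hsub (Set.toFinite _)
    _ = Nat.card {v : V | (A ⊔ B).connectedComponentMk v = (A ⊔ B).connectedComponentMk u} :=
        (Nat.card_coe_set_eq _).symm
    _ = _ := rfl

lemma pm_two_mul_card_cc_le (hA : ∀ v, ∃! w, A.Adj v w) :
    2 * Nat.card (A ⊔ B).ConnectedComponent ≤ Nat.card V := by
  classical
  haveI : Fintype (A ⊔ B).ConnectedComponent := Fintype.ofFinite _
  rw [pm_card_eq_sum_fibers (A ⊔ B), finsum_eq_sum_of_fintype]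
  calc 2 * Nat.card (A ⊔ B).ConnectedComponent
      = ∑ _c : (A ⊔ B).ConnectedComponent, 2 := by
        simp [Finset.sum_const, Nat.card_eq_fintype_card, mul_comm]
    _ ≤ _ := Finset.sum_le_sum fun c _ => pm_two_le_fiber hA c

lemma pm_two_mul_card_cc_lt (hA : ∀ v, ∃! w, A.Adj v w) (hB : ∀ v, ∃! w, B.Adj v w)
    (hne : A ≠ B) :
    2 * Nat.card (A ⊔ B).ConnectedComponent < Nat.card V := by
  classical
  have : ∃ u, pmPtr hA u ≠ pmPtr hB u := by
    by_contra hc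
    push_neg at hc
    exact hne (pm_matching_eq_of_ptr_eq hA hB hc)
  obtain ⟨u, hu⟩ := this
  haveI : Fintype (A ⊔ B).ConnectedComponent := Fintype.ofFinite _
  rw [pm_card_eq_sum_fibers (A ⊔ B), finsum_eq_sum_of_fintype]
  have h1 : 2 * Nat.card (A ⊔ B).ConnectedComponent
      = ∑ _c : (A ⊔ B).ConnectedComponent, 2 := by
    simp [Finset.sum_const, Nat.card_eq_fintype_card, mul_comm]
  rw [h1]
  refine Finset.sum_lt_sum (fun c _ => pm_two_le_fiber hA c) ?_
  exact ⟨(A ⊔ B).connectedComponentMk u, Finset.mem_univ _, by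
    have := pm_three_le_fiber hA hB hu; omega⟩

lemma pm_two_mul_card_cc_matching (hA : ∀ v, ∃! w, A.Adj v w) :
    2 * Nat.card A.ConnectedComponent = Nat.card V := by
  classical
  haveI : Fintype A.ConnectedComponent := Fintype.ofFinite _
  rw [pm_card_eq_sum_fibers A, finsum_eq_sum_of_fintype]
  have hfib : ∀ c : A.ConnectedComponent,
      Nat.card {v : V // A.connectedComponentMk v = c} = 2 := by
    intro c
    induction c using ConnectedComponent.ind with
    | _ u =>
      have hset : {v : V | A.connectedComponentMk v = A.connectedComponentMk u}
          = {u, pmPtr hA u} := by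
        ext v
        simp only [Set.mem_setOf_eq, Set.mem_insert_iff, Set.mem_singleton_iff]
        rw [ConnectedComponent.eq]
        constructor
        · intro hr
          exact (pm_matching_reach hA).mp hr.symm
        · rintro (rfl | rfl)
          · exact Reachable.refl _
          · exact (pmPtr_adj hA u).reachable.symm
      have h0 : Nat.card {v : V // A.connectedComponentMk v = A.connectedComponentMk u}
          = Nat.card ({u, pmPtr hA u} : Set V) :=
        Nat.card_congr (Equiv.setCongr hset)
      rw [h0, Nat.card_coe_set_eq, Set.ncard_pair (pmPtr_ne hA u).symm]
  rw [Finset.sum_congr rfl fun c _ => hfib c, Finset.sum_const]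
  simp [Nat.card_eq_fintype_card, mul_comm]
end fibers

/-- symmDiff adjacency -/
lemma pm_symmDiff_adj {A N : SimpleGraph V} {x y : V} :
    (symmDiff A N).Adj x y ↔ (A.Adj x y ∧ ¬ N.Adj x y) ∨ (N.Adj x y ∧ ¬ A.Adj x y) := by
  rw [symmDiff_def]
  simp [sup_adj, sdiff_adj]

lemma pm_cycle4_extract {D : SimpleGraph V} (h : IsCycleGraphOfLength D 4) :
    ∃ a b c d : V, a ≠ b ∧ a ≠ c ∧ a ≠ d ∧ b ≠ c ∧ b ≠ d ∧ c ≠ d ∧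
      D.Adj a b ∧ D.Adj b c ∧ D.Adj c d ∧ D.Adj d a ∧
      ∀ x y, D.Adj x y →
        ((x = a ∧ y = b) ∨ (x = b ∧ y = a) ∨ (x = b ∧ y = c) ∨ (x = c ∧ y = b) ∨
         (x = c ∧ y = d) ∨ (x = d ∧ y = c) ∨ (x = d ∧ y = a) ∨ (x = a ∧ y = d)) := by
  obtain ⟨a, p, hcyc, hlen, hedges⟩ := h
  cases p with
  | nil => simp at hlen
  | @cons _ b _ h1 p =>
    cases p with
    | nil => simp at hlen
    | @cons _ c _ h2 p =>
      cases p with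
      | nil => simp at hlen
      | @cons _ d _ h3 p =>
        cases p with
        | nil => simp at hlen
        | @cons _ e _ h4 p =>
          cases p with
          | @cons _ f _ h5 p => simp [SimpleGraph.Walk.length_cons] at hlen
          | nil =>
            have hnd := ((SimpleGraph.Walk.isCycle_def _).mp hcyc).2.2
            simp [SimpleGraph.Walk.support_cons] at hnd
            obtain ⟨⟨hbc, hbd, hba⟩, ⟨hcd, hca⟩, hda⟩ := hnd
            refine ⟨a, b, c, d, Ne.symm hba, Ne.symm hca, Ne.symm hda,
              hbc, hbd, hcd, h1, h2, h3, h4, ?_⟩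
            intro x y hxy
            have hmem := hedges _ (D.mem_edgeSet.mpr hxy)
            simp [SimpleGraph.Walk.edges_cons, Sym2.eq_iff] at hmem
            tauto

/-- structure of an adjacency step in the matching graph -/
lemma pm_swap_struct {A N : SimpleGraph V} (hA : ∀ v, ∃! w, A.Adj v w)
    (hN : ∀ v, ∃! w, N.Adj v w) (h4 : IsCycleGraphOfLength (symmDiff A N) 4) :
    ∃ a b c d : V, a ≠ b ∧ a ≠ c ∧ a ≠ d ∧ b ≠ c ∧ b ≠ d ∧ c ≠ d ∧
      (∀ x y, x ∉ ({a,b,c,d} : Set V) → (A.Adj x y ↔ N.Adj x y)) ∧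
      ((A.Adj a b ∧ A.Adj c d ∧ N.Adj b c ∧ N.Adj d a) ∨
       (N.Adj a b ∧ N.Adj c d ∧ A.Adj b c ∧ A.Adj d a)) := by
  obtain ⟨a, b, c, d, hab, hac, had, hbc, hbd, hcd, h1, h2, h3, h4', hsupp⟩ :=
    pm_cycle4_extract h4
  refine ⟨a, b, c, d, hab, hac, had, hbc, hbd, hcd, ?_, ?_⟩
  · intro x y hx
    have hnadj : ¬ (symmDiff A N).Adj x y := by
      intro hadj
      rcases hsupp x y hadj with ⟨rfl,-⟩|⟨rfl,-⟩|⟨rfl,-⟩|⟨rfl,-⟩|⟨rfl,-⟩|⟨rfl,-⟩|⟨rfl,-⟩|⟨rfl,-⟩ <;>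
        simp at hx
    rw [pm_symmDiff_adj] at hnadj
    tauto
  · rw [pm_symmDiff_adj] at h1 h2 h3 h4'
    rcases h1 with ⟨hAab, hNab⟩ | ⟨hNab, hAab⟩
    · left
      have hNbc : N.Adj b c := by
        rcases h2 with ⟨hAbc, -⟩ | ⟨h, -⟩
        · exfalso
          have e1 := (pm_adj_iff hA).mp hAbc
          have e2 := (pm_adj_iff hA).mp hAab.symm
          exact hac (e2 ▸ e1 ▸ rfl)
        · exact h
      have hAcd : A.Adj c d := by
        rcases h3 with ⟨h, -⟩ | ⟨hNcd, -⟩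
        · exact h
        · exfalso
          have e1 := (pm_adj_iff hN).mp hNcd
          have e2 := (pm_adj_iff hN).mp hNbc.symm
          exact hbd (e2 ▸ e1 ▸ rfl)
      have hNda : N.Adj d a := by
        rcases h4' with ⟨hAda, -⟩ | ⟨h, -⟩
        · exfalso
          have e1 := (pm_adj_iff hA).mp hAda.symm
          have e2 := (pm_adj_iff hA).mp hAab
          exact hbd ((e2 ▸ e1 ▸ rfl : b = d))
        · exact h
      exact ⟨hAab, hAcd, hNbc, hNda⟩
    · right
      have hAbc : A.Adj b c := by
        rcases h2 with ⟨h, -⟩ | ⟨hNbc, -⟩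
        · exact h
        · exfalso
          have e1 := (pm_adj_iff hN).mp hNbc
          have e2 := (pm_adj_iff hN).mp hNab.symm
          exact hac (e2 ▸ e1 ▸ rfl)
      have hNcd : N.Adj c d := by
        rcases h3 with ⟨hAcd, -⟩ | ⟨h, -⟩
        · exfalso
          have e1 := (pm_adj_iff hA).mp hAcd
          have e2 := (pm_adj_iff hA).mp hAbc.symm
          exact hbd (e2 ▸ e1 ▸ rfl)
        · exact h
      have hAda : A.Adj d a := by
        rcases h4' with ⟨h, -⟩ | ⟨hNda, -⟩
        · exact h
        · exfalso
          have e1 := (pm_adj_iff hN).mp hNda.symm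
          have e2 := (pm_adj_iff hN).mp hNab
          exact hbd ((e2 ▸ e1 ▸ rfl : b = d))
      exact ⟨hNab, hNcd, hAbc, hAda⟩

/-- lower bound step -/
lemma pm_step_le [Finite V] {A N B : SimpleGraph V} (hA : ∀ v, ∃! w, A.Adj v w)
    (hN : ∀ v, ∃! w, N.Adj v w)
    (h4 : IsCycleGraphOfLength (symmDiff A N) 4) :
    Nat.card (N ⊔ B).ConnectedComponent ≤ Nat.card (A ⊔ B).ConnectedComponent + 1 := by
  obtain ⟨a, b, c, d, hab, hac, had, hbc, hbd, hcd, htr, hcase⟩ := pm_swap_struct hA hN h4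
  have h1 : ∀ x y, x ∉ ({a,b,c,d} : Set V) → ((N ⊔ B).Adj x y ↔ (A ⊔ B).Adj x y) := by
    intro x y hx
    simp only [sup_adj]
    rw [htr x y hx]
  rcases hcase with ⟨hAab, hAcd, hNbc, hNda⟩ | ⟨hNab, hNcd, hAbc, hAda⟩
  · -- use vertices (b, c, d, a)
    have hseq : ({b, c, d, a} : Set V) = ({a, b, c, d} : Set V) := by
      ext x; simp; tauto
    have h1' : ∀ x y, x ∉ ({b,c,d,a} : Set V) → ((N ⊔ B).Adj x y ↔ (A ⊔ B).Adj x y) := by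
      rw [hseq]; exact h1
    exact pm_L1 h1' (Or.inl hNbc) (Or.inl hNda)
  · exact pm_L1 h1 (Or.inl hNab) (Or.inl hNcd)

end Aux

/-! ### The swap construction -/

section Swap
variable {n : ℕ}

lemma pm_exists_swap {A B : SimpleGraph (Fin n)} (hA : IsPerfMatching A)
    (hB : IsPerfMatching B) (hne : A ≠ B) :
    ∃ A' : SimpleGraph (Fin n), IsPerfMatching A' ∧ MatchAdj A A' ∧
      Nat.card (A ⊔ B).ConnectedComponent + 1 ≤ Nat.card (A' ⊔ B).ConnectedComponent := by
  classical
  obtain ⟨a, hu⟩ : ∃ u, pmPtr hA u ≠ pmPtr hB u := by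
    by_contra hc
    push_neg at hc
    exact hne (pm_matching_eq_of_ptr_eq hA hB hc)
  set f : Fin n → Fin n := pmPtr hA with hf
  set g : Fin n → Fin n := pmPtr hB with hg
  obtain ⟨b, hb0⟩ : ∃ w, w = f a := ⟨_, rfl⟩
  obtain ⟨d, hd0⟩ : ∃ w, w = g a := ⟨_, rfl⟩
  obtain ⟨c, hc0⟩ : ∃ w, w = f d := ⟨_, rfl⟩
  have hff : ∀ z, f (f z) = z := fun z => pmPtr_invol hA z
  have hbd : b ≠ d := by rw [hb0, hd0]; exact hu
  have hfb : f b = a := by rw [hb0]; exact hff a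
  have hfc : f c = d := by rw [hc0]; exact hff d
  have hgd : g d = a := by rw [hd0]; exact pmPtr_invol hB a
  have hba : b ≠ a := by rw [hb0]; exact pmPtr_ne hA a
  have hda : d ≠ a := by rw [hd0]; exact pmPtr_ne hB a
  have hcd : c ≠ d := by rw [hc0]; exact pmPtr_ne hA d
  have hca : c ≠ a := by
    intro h
    apply hbd.symm
    rw [← hfc, h, ← hb0]
  have hcb : c ≠ b := by
    intro h
    apply hda
    rw [← hfc, h, hfb]
  set f' : Fin n → Fin n := fun x =>
    if x = a then d else if x = d then a else if x = b then c else if x = c then b else f x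
    with hf'
  have hf'a : f' a = d := by simp [hf']
  have hf'd : f' d = a := by simp [hf', hda]
  have hf'b : f' b = c := by simp [hf', hba, hbd]
  have hf'c : f' c = b := by simp [hf', hca, hcd, hcb]
  have hf'other : ∀ x, x ≠ a → x ≠ b → x ≠ c → x ≠ d → f' x = f x := by
    intro x h1 h2 h3 h4
    simp [hf', h1, h2, h3, h4]
  have hnofix : ∀ x, f' x ≠ x := by
    intro x
    by_cases h1 : x = a
    · subst h1; rw [hf'a]; exact hda
    by_cases h2 : x = d
    · subst h2; rw [hf'd]; exact hda.symm
    by_cases h3 : x = b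
    · subst h3; rw [hf'b]; exact hcb
    by_cases h4 : x = c
    · subst h4; rw [hf'c]; exact hcb.symm
    · rw [hf'other x h1 h3 h4 h2]; exact pmPtr_ne hA x
  have hinvol : ∀ x, f' (f' x) = x := by
    intro x
    by_cases h1 : x = a
    · subst h1; rw [hf'a, hf'd]
    by_cases h2 : x = d
    · subst h2; rw [hf'd, hf'a]
    by_cases h3 : x = b
    · subst h3; rw [hf'b, hf'c]
    by_cases h4 : x = c
    · subst h4; rw [hf'c, hf'b]
    · rw [hf'other x h1 h3 h4 h2]
      have hfxa : f x ≠ a := fun h => h3 (by rw [← hff x, h]; exact hb0.symm)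
      have hfxb : f x ≠ b := fun h => h1 (by rw [← hff x, h]; exact hfb)
      have hfxc : f x ≠ c := fun h => h2 (by rw [← hff x, h]; exact hfc)
      have hfxd : f x ≠ d := fun h => h4 (by rw [← hff x, h]; exact hc0.symm)
      rw [hf'other (f x) hfxa hfxb hfxc hfxd, hff]
  -- the swapped matching
  set A' : SimpleGraph (Fin n) :=
    { Adj := fun x y => f' x = y ∧ x ≠ y
      symm := ⟨by
        rintro x y ⟨h, hne'⟩
        exact ⟨by rw [← h, hinvol], hne'.symm⟩⟩
      loopless := ⟨fun x h => h.2 rfl⟩ } with hA'def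
  have hA'adj : ∀ x y, A'.Adj x y ↔ f' x = y := by
    intro x y
    constructor
    · rintro ⟨h, -⟩; exact h
    · intro h; exact ⟨h, fun he => hnofix x (he ▸ h)⟩
  have hA'pm : IsPerfMatching A' := by
    intro v
    refine ⟨f' v, (hA'adj v (f' v)).mpr rfl, fun y hy => ((hA'adj v y).mp hy).symm⟩
  have hAadj : ∀ x y, A.Adj x y ↔ f x = y := fun x y => pm_adj_iff hA
  have hBadj : ∀ x y, B.Adj x y ↔ g x = y := fun x y => pm_adj_iff hB
  -- the symmetric difference is the 4-cycle a b c d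
  have hDab : (symmDiff A A').Adj a b := by
    rw [pm_symmDiff_adj]
    left
    exact ⟨(hAadj a b).mpr hb0.symm,
      fun h => hbd.symm (by rw [← (hA'adj a b).mp h, hf'a])⟩
  have hDbc : (symmDiff A A').Adj b c := by
    rw [pm_symmDiff_adj]
    right
    exact ⟨(hA'adj b c).mpr hf'b, fun h => hca (by rw [← (hAadj b c).mp h, hfb])⟩
  have hDcd : (symmDiff A A').Adj c d := by
    rw [pm_symmDiff_adj]
    left
    exact ⟨(hAadj c d).mpr hfc, fun h => hbd (by rw [← (hA'adj c d).mp h, hf'c])⟩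
  have hDda : (symmDiff A A').Adj d a := by
    rw [pm_symmDiff_adj]
    right
    exact ⟨(hA'adj d a).mpr hf'd, fun h => hca (by rw [← (hAadj d a).mp h, ← hc0])⟩
  -- A ≠ A'
  have hAne : A ≠ A' := by
    intro h
    have h1 : A'.Adj a b := h ▸ ((hAadj a b).mpr hb0.symm)
    have h2 := (hA'adj a b).mp h1
    rw [hf'a] at h2
    exact hbd h2.symm
  -- the 4-cycle walk
  have hcyc4 : IsCycleGraphOfLength (symmDiff A A') 4 := by
    refine ⟨a, Walk.cons hDab (Walk.cons hDbc (Walk.cons hDcd (Walk.cons hDda Walk.nil))),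
      ?_, by simp, ?_⟩
    · rw [SimpleGraph.Walk.isCycle_def]
      refine ⟨?_, by simp, ?_⟩
      · rw [SimpleGraph.Walk.isTrail_def]
        simp only [SimpleGraph.Walk.edges_cons, SimpleGraph.Walk.edges_nil,
          List.nodup_cons, List.mem_cons, List.not_mem_nil, List.nodup_nil, or_false,
          Sym2.eq_iff]
        have h1 : a ≠ b := hba.symm
        have h2 : a ≠ c := hca.symm
        have h3 : a ≠ d := hda.symm
        have h4 : b ≠ c := hcb.symm
        have h5 : d ≠ c := hcd.symm
        have h6 : d ≠ a := hda
        tauto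
      · simp only [SimpleGraph.Walk.support_cons, SimpleGraph.Walk.support_nil,
          List.tail_cons, List.nodup_cons, List.mem_cons, List.not_mem_nil,
          List.nodup_nil, or_false, and_true, not_or]
        exact ⟨⟨fun h => hcb h.symm, hbd, hba⟩, ⟨hcd, hca⟩, hda, not_false⟩
    · intro e he
      induction e with
      | _ x y =>
        rw [mem_edgeSet, pm_symmDiff_adj] at he
        have hx : x = a ∨ x = b ∨ x = c ∨ x = d := by
          by_contra hc'
          push_neg at hc'
          obtain ⟨hxa, hxb, hxc, hxd⟩ := hc'
          rw [hAadj, hA'adj, hf'other x hxa hxb hxc hxd] at he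
          tauto
        simp only [SimpleGraph.Walk.edges_cons, SimpleGraph.Walk.edges_nil,
          List.mem_cons, List.not_mem_nil, or_false, Sym2.eq_iff]
        rcases hx with rfl | rfl | rfl | rfl
        · rcases he with ⟨h, -⟩ | ⟨h, -⟩
          · have h2 := (hAadj x y).mp h
            rw [← hb0] at h2
            have h3 := h2.symm
            tauto
          · have h2 := (hA'adj x y).mp h
            rw [hf'a] at h2
            have h3 := h2.symm
            tauto
        · rcases he with ⟨h, -⟩ | ⟨h, -⟩
          · have h2 := (hAadj x y).mp h
            rw [hfb] at h2
            have h3 := h2.symm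
            tauto
          · have h2 := (hA'adj x y).mp h
            rw [hf'b] at h2
            have h3 := h2.symm
            tauto
        · rcases he with ⟨h, -⟩ | ⟨h, -⟩
          · have h2 := (hAadj x y).mp h
            rw [hfc] at h2
            have h3 := h2.symm
            tauto
          · have h2 := (hA'adj x y).mp h
            rw [hf'c] at h2
            have h3 := h2.symm
            tauto
        · rcases he with ⟨h, -⟩ | ⟨h, -⟩
          · have h2 := (hAadj x y).mp h
            rw [← hc0] at h2
            have h3 := h2.symm
            tauto
          · have h2 := (hA'adj x y).mp h
            rw [hf'd] at h2
            have h3 := h2.symm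
            tauto
  refine ⟨A', hA'pm, ⟨hAne, hcyc4⟩, ?_⟩
  refine pm_L1' (G := A ⊔ B) (G' := A' ⊔ B) (a := a) (b := b) (c := c) (d := d)
    ?_ hba hbd ?_ ?_ ?_ ?_ ?_
  · intro x y hx
    simp only [Set.mem_insert_iff, Set.mem_singleton_iff] at hx
    push_neg at hx
    obtain ⟨hxa, hxb, hxc, hxd⟩ := hx
    simp only [sup_adj]
    rw [hAadj]
    constructor
    · rintro (h | h)
      · refine Or.inl ((hA'adj x y).mpr ?_)
        rw [hf'other x hxa hxb hxc hxd]; exact h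
      · exact Or.inr h
    · rintro (h | h)
      · have := (hA'adj x y).mp h
        rw [hf'other x hxa hxb hxc hxd] at this
        exact Or.inl this
      · exact Or.inr h
  · exact Or.inl ((hAadj a b).mpr hb0.symm)
  · exact Or.inr ((hBadj a d).mpr hd0.symm)
  · exact Or.inl ((hAadj d c).mpr hc0.symm)
  · intro y hy
    rcases hy with h | h
    · rw [← (hA'adj a y).mp h, hf'a]
    · rw [← (hBadj a y).mp h, ← hd0]
  · intro y hy
    rcases hy with h | h
    · rw [← (hA'adj d y).mp h, hf'd]
    · rw [← (hBadj d y).mp h, hgd]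

end Swap

/-! ### Final assembly -/

section Main
variable {m : ℕ}

lemma pm_card_fin (m : ℕ) : Nat.card (Fin (2 * m)) = 2 * m := by
  simp [Nat.card_eq_fintype_card]

/-- lower bound: every walk in the matching graph has length at least `m - l`. -/
lemma pm_walk_ge {M N : PMVertex m} (w : (matchingGraph m).Walk M N) :
    m ≤ w.length + Nat.card (M.1 ⊔ N.1).ConnectedComponent := by
  induction w with
  | nil =>
    rename_i M
    have h1 : (M.1 ⊔ M.1) = M.1 := sup_idem _
    have h2 := pm_two_mul_card_cc_matching (V := Fin (2 * m)) M.2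
    rw [pm_card_fin] at h2
    rw [SimpleGraph.Walk.length_nil, h1]
    omega
  | @cons M N₁ N hadj w ih =>
    have hstep : Nat.card (N₁.1 ⊔ N.1).ConnectedComponent
        ≤ Nat.card (M.1 ⊔ N.1).ConnectedComponent + 1 :=
      pm_step_le M.2 N₁.2 hadj.2
    rw [SimpleGraph.Walk.length_cons]
    omega

/-- upper bound: there is a walk of length at most `m - l`. -/
lemma pm_walk_le : ∀ (k : ℕ) (M N : PMVertex m),
    m ≤ Nat.card (M.1 ⊔ N.1).ConnectedComponent + k →
    ∃ w : (matchingGraph m).Walk M N,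
      w.length + Nat.card (M.1 ⊔ N.1).ConnectedComponent ≤ m := by
  intro k
  induction k with
  | zero =>
    intro M N hk
    have heq : M = N := by
      by_contra hne
      have hne' : M.1 ≠ N.1 := fun h => hne (Subtype.ext h)
      have := pm_two_mul_card_cc_lt (V := Fin (2 * m)) M.2 N.2 hne'
      rw [pm_card_fin] at this
      omega
    subst heq
    refine ⟨SimpleGraph.Walk.nil, ?_⟩
    have h1 : (M.1 ⊔ M.1) = M.1 := sup_idem _
    have h2 := pm_two_mul_card_cc_matching (V := Fin (2 * m)) M.2
    rw [pm_card_fin] at h2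
    rw [SimpleGraph.Walk.length_nil, h1]
    omega
  | succ k ih =>
    intro M N hk
    by_cases heq : M = N
    · subst heq
      refine ⟨SimpleGraph.Walk.nil, ?_⟩
      have h1 : (M.1 ⊔ M.1) = M.1 := sup_idem _
      have h2 := pm_two_mul_card_cc_matching (V := Fin (2 * m)) M.2
      rw [pm_card_fin] at h2
      rw [SimpleGraph.Walk.length_nil, h1]
      omega
    · have hne' : M.1 ≠ N.1 := fun h => heq (Subtype.ext h)
      obtain ⟨A', hA'pm, hadj, hcard⟩ := pm_exists_swap M.2 N.2 hne'
      set M' : PMVertex m := ⟨A', hA'pm⟩ with hM'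
      have hk' : m ≤ Nat.card (M'.1 ⊔ N.1).ConnectedComponent + k := by
        have : Nat.card (M.1 ⊔ N.1).ConnectedComponent + 1
            ≤ Nat.card (M'.1 ⊔ N.1).ConnectedComponent := hcard
        omega
      obtain ⟨w', hw'⟩ := ih M' N hk'
      refine ⟨SimpleGraph.Walk.cons (show (matchingGraph m).Adj M M' from hadj) w', ?_⟩
      rw [SimpleGraph.Walk.length_cons]
      have : Nat.card (M.1 ⊔ N.1).ConnectedComponent + 1
          ≤ Nat.card (M'.1 ⊔ N.1).ConnectedComponent := hcard
      omega

end Main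

/-- The distance in `𝒫ₘ` between two perfect matchings `M₁, M₂` of `K_{2m}` is
`m - l`, where `l` is the number of connected components of `M₁ ∪ M₂`. -/
theorem stmt4 (m : ℕ) (hm : 1 ≤ m) (M₁ M₂ : PMVertex m) (l : ℕ)
    (hl : l = Nat.card (M₁.1 ⊔ M₂.1).ConnectedComponent) :
    (matchingGraph m).dist M₁ M₂ = m - l := by
  subst hl
  obtain ⟨w, hw⟩ := pm_walk_le m M₁ M₂ (by omega)
  have hub : (matchingGraph m).dist M₁ M₂ ≤ w.length := SimpleGraph.dist_le w
  have hreach : (matchingGraph m).Reachable M₁ M₂ := ⟨w⟩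
  obtain ⟨p, hp⟩ := hreach.exists_walk_length_eq_dist
  have hlb := pm_walk_ge p
  rw [hp] at hlb
  omega
end

section
/- For every m ≥ 1, the eccentricity of every vertex of 𝒫_m equals m-1, and consequently the diameter of 𝒫_m equals m-1. -/
open SimpleGraph

namespace PM5
variable {n : ℕ}

/-- partner function of a perfect matching -/
noncomputable def pf {M : SimpleGraph (Fin n)} (hM : IsPerfMatching M) (v : Fin n) : Fin n :=
  Classical.choose (hM v)

lemma pf_adj {M : SimpleGraph (Fin n)} (hM : IsPerfMatching M) (v : Fin n) :
    M.Adj v (pf hM v) := (Classical.choose_spec (hM v)).1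

lemma pf_eq {M : SimpleGraph (Fin n)} (hM : IsPerfMatching M) {v w : Fin n}
    (h : M.Adj v w) : w = pf hM v := (Classical.choose_spec (hM v)).2 w h

lemma adj_iff_pf {M : SimpleGraph (Fin n)} (hM : IsPerfMatching M) {v w : Fin n} :
    M.Adj v w ↔ pf hM v = w :=
  ⟨fun h => (pf_eq hM h).symm, fun h => h ▸ pf_adj hM v⟩

lemma pf_invol {M : SimpleGraph (Fin n)} (hM : IsPerfMatching M) (v : Fin n) :
    pf hM (pf hM v) = v := ((pf_eq hM (pf_adj hM v).symm)).symm

lemma pf_ne {M : SimpleGraph (Fin n)} (hM : IsPerfMatching M) (v : Fin n) :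
    pf hM v ≠ v := fun h => M.irrefl (h ▸ pf_adj hM v)

/-- build a matching from a fixed-point-free involution -/
def mkM (g : Fin n → Fin n) (hg : Function.Involutive g) (hfp : ∀ v, g v ≠ v) :
    SimpleGraph (Fin n) where
  Adj v w := g v = w
  symm := ⟨by rintro v w rfl; exact hg v⟩
  loopless := ⟨fun v h => hfp v h⟩

lemma mkM_adj {g : Fin n → Fin n} {hg : Function.Involutive g} {hfp : ∀ v, g v ≠ v}
    {v w : Fin n} : (mkM g hg hfp).Adj v w ↔ g v = w := Iff.rfl

lemma mkM_perf {g : Fin n → Fin n} (hg : Function.Involutive g) (hfp : ∀ v, g v ≠ v) :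
    IsPerfMatching (mkM g hg hfp) :=
  fun v => ⟨g v, rfl, fun y h => Eq.symm h⟩

lemma pf_mkM {g : Fin n → Fin n} (hg : Function.Involutive g) (hfp : ∀ v, g v ≠ v)
    (v : Fin n) : pf (mkM_perf hg hfp) v = g v :=
  (pf_eq (mkM_perf hg hfp) (mkM_adj.mpr rfl)).symm

/-- a set closed under adjacency contains every vertex reachable from it -/
lemma walk_closed {V : Type*} {G : SimpleGraph V} (U : Set V)
    (hU : ∀ u ∈ U, ∀ w, G.Adj u w → w ∈ U) {v w : V} (p : G.Walk v w) :
    v ∈ U → w ∈ U := by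
  induction p with
  | nil => exact id
  | cons h q ih => exact fun hv => ih (hU _ hv _ h)

lemma pf_reach {M : SimpleGraph (Fin n)} (hM : IsPerfMatching M) {v w : Fin n}
    (h : M.Reachable v w) : w = v ∨ w = pf hM v := by
  obtain ⟨p⟩ := h
  have := walk_closed (G := M) {x | x = v ∨ x = pf hM v} ?_ p (Or.inl rfl)
  · exact this
  · rintro u (rfl | rfl) w hw
    · exact Or.inr (pf_eq hM hw)
    · left; rw [pf_eq hM hw, pf_invol]


variable {V : Type*}

/-- walks transfer between graphs that agree off `S`, as long as the start's
component avoids `S` -/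
lemma walk_transfer {G G' : SimpleGraph V} {S : Set V}
    (h : ∀ v w, v ∉ S → (G.Adj v w ↔ G'.Adj v w)) {v w : V} (hr : G'.Reachable v w) :
    (∀ s ∈ S, ¬ G.Reachable v s) → G.Reachable v w := by
  obtain ⟨p⟩ := hr
  induction p with
  | nil => exact fun _ => Reachable.refl _
  | @cons u x w hadj q ih =>
    intro hgood
    have hu : u ∉ S := fun hs => hgood u hs (Reachable.refl u)
    have hGadj : G.Adj u x := (h u x hu).mpr hadj
    have hx : ∀ s ∈ S, ¬ G.Reachable x s :=
      fun s hs hr => hgood s hs (hGadj.reachable.trans hr)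
    exact hGadj.reachable.trans (ih hx)

/-- the components avoiding `S` -/
def AS (G : SimpleGraph V) (S : Set V) : Set G.ConnectedComponent :=
  {c | ∀ s ∈ S, G.connectedComponentMk s ≠ c}

lemma mk_out (G : SimpleGraph V) (c : G.ConnectedComponent) :
    G.connectedComponentMk (Quot.out c) = c := Quot.out_eq c

lemma AS_avoid {G : SimpleGraph V} {S : Set V} {c : G.ConnectedComponent}
    (hc : c ∈ AS G S) : ∀ s ∈ S, ¬ G.Reachable (Quot.out c) s := by
  intro s hs hr
  exact hc s hs (((ConnectedComponent.eq).mpr hr.symm).trans (mk_out G c))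

lemma AS_ncard_le [Finite V] (G G' : SimpleGraph V) (S : Set V)
    (h : ∀ v w, v ∉ S → (G.Adj v w ↔ G'.Adj v w)) :
    (AS G S).ncard ≤ (AS G' S).ncard := by
  have F : ∀ c : AS G S, G'.connectedComponentMk (Quot.out c.1) ∈ AS G' S := by
    rintro ⟨c, hc⟩ s hs heq
    have hr' : G'.Reachable (Quot.out c) s := ((ConnectedComponent.eq).mp heq).symm
    exact AS_avoid hc s hs (walk_transfer h hr' (AS_avoid hc))
  have hinj : Function.Injective (fun c : AS G S => (⟨_, F c⟩ : AS G' S)) := by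
    rintro ⟨c₁, h₁⟩ ⟨c₂, h₂⟩ hF
    have : G'.Reachable (Quot.out c₁) (Quot.out c₂) :=
      (ConnectedComponent.eq).mp (congrArg Subtype.val hF)
    have hG : G.Reachable (Quot.out c₁) (Quot.out c₂) :=
      walk_transfer h this (AS_avoid h₁)
    have := (ConnectedComponent.eq).mpr hG
    rw [mk_out, mk_out] at this
    exact Subtype.ext this
  have := Nat.card_le_card_of_injective _ hinj
  simpa [Set.ncard] using this

lemma AS_compl {G : SimpleGraph V} {S : Set V} :
    (AS G S)ᶜ = {c | ∃ s ∈ S, G.connectedComponentMk s = c} := by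
  ext c; simp [AS]

/-- components can drop by at most 1 -/
lemma comp_le [Finite V] (G G' : SimpleGraph V) (S : Set V)
    (h : ∀ v w, v ∉ S → (G.Adj v w ↔ G'.Adj v w))
    (a b : V) (hpair : ∀ s ∈ S, G.Reachable a s ∨ G.Reachable b s)
    (hne : S.Nonempty) :
    Nat.card G.ConnectedComponent ≤ Nat.card G'.ConnectedComponent + 1 := by
  have h1 : (AS G S).ncard ≤ (AS G' S).ncard := AS_ncard_le G G' S h
  have h2 : (AS G S)ᶜ.ncard ≤ 2 := by
    have hsub : (AS G S)ᶜ ⊆ {G.connectedComponentMk a, G.connectedComponentMk b} := by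
      rw [AS_compl]
      rintro c ⟨s, hs, rfl⟩
      rcases hpair s hs with hr | hr
      · exact Or.inl ((ConnectedComponent.eq).mpr hr).symm
      · exact Or.inr ((ConnectedComponent.eq).mpr hr).symm
    calc (AS G S)ᶜ.ncard ≤ _ := Set.ncard_le_ncard hsub (Set.toFinite _)
    _ ≤ 2 := by
      apply le_trans (Set.ncard_insert_le _ _)
      simp
  have h3 : 1 ≤ (AS G' S)ᶜ.ncard := by
    obtain ⟨s₀, hs₀⟩ := hne
    have : (AS G' S)ᶜ.Nonempty := ⟨G'.connectedComponentMk s₀, by rw [AS_compl]; exact ⟨s₀, hs₀, rfl⟩⟩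
    exact (Set.ncard_pos (Set.toFinite _)).mpr this
  have h4 := Set.ncard_add_ncard_compl (AS G S)
  have h5 := Set.ncard_add_ncard_compl (AS G' S)
  omega

/-- components can be forced up by 1 -/
lemma comp_ge [Finite V] (G G' : SimpleGraph V) (S : Set V)
    (h : ∀ v w, v ∉ S → (G.Adj v w ↔ G'.Adj v w))
    (a : V) (hpair : ∀ s ∈ S, G.Reachable a s)
    (x y : V) (hx : x ∈ S) (hy : y ∈ S) (hxy : ¬ G'.Reachable x y) :
    Nat.card G.ConnectedComponent + 1 ≤ Nat.card G'.ConnectedComponent := by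
  have h1 : (AS G S).ncard ≤ (AS G' S).ncard := AS_ncard_le G G' S h
  have h2 : (AS G S)ᶜ.ncard ≤ 1 := by
    have hsub : (AS G S)ᶜ ⊆ {G.connectedComponentMk a} := by
      rw [AS_compl]
      rintro c ⟨s, hs, rfl⟩
      exact (((ConnectedComponent.eq).mpr (hpair s hs)).symm : _)
    calc (AS G S)ᶜ.ncard ≤ _ := Set.ncard_le_ncard hsub (Set.toFinite _)
    _ ≤ 1 := by simp
  have h3 : 2 ≤ (AS G' S)ᶜ.ncard := by
    have hsub : {G'.connectedComponentMk x, G'.connectedComponentMk y} ⊆ (AS G' S)ᶜ := by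
      rw [AS_compl]
      rintro c (rfl | rfl)
      exacts [⟨x, hx, rfl⟩, ⟨y, hy, rfl⟩]
    have hne2 : G'.connectedComponentMk x ≠ G'.connectedComponentMk y :=
      fun hc => hxy ((ConnectedComponent.eq).mp hc)
    calc 2 = ({G'.connectedComponentMk x, G'.connectedComponentMk y} : Set _).ncard :=
        (Set.ncard_pair hne2).symm
    _ ≤ _ := Set.ncard_le_ncard hsub (Set.toFinite _)
  have h4 := Set.ncard_add_ncard_compl (AS G S)
  have h5 := Set.ncard_add_ncard_compl (AS G' S)
  omega


variable {n : ℕ}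

/-- set of smaller endpoints of edges of a perfect matching -/
noncomputable def TS {M : SimpleGraph (Fin n)} (hM : IsPerfMatching M) : Finset (Fin n) :=
  Finset.univ.filter (fun v => v < pf hM v)

lemma mem_TS {M : SimpleGraph (Fin n)} (hM : IsPerfMatching M) {v : Fin n} :
    v ∈ TS hM ↔ v < pf hM v := by simp [TS]

lemma pf_mem_TS {M : SimpleGraph (Fin n)} (hM : IsPerfMatching M) {v : Fin n} :
    v ∉ TS hM ↔ pf hM v ∈ TS hM := by
  rw [mem_TS, mem_TS, pf_invol]
  have := pf_ne hM v
  constructor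
  · intro h; exact lt_of_le_of_ne (not_lt.mp h) (fun hh => this hh)
  · intro h; exact not_lt.mpr (le_of_lt h)

lemma card_TS {M : SimpleGraph (Fin n)} (hM : IsPerfMatching M) :
    2 * (TS hM).card = n := by
  have himg : (TS hM)ᶜ = (TS hM).image (pf hM) := by
    ext v
    simp only [Finset.mem_compl, Finset.mem_image]
    constructor
    · intro hv
      exact ⟨pf hM v, (pf_mem_TS hM).mp hv, pf_invol hM v⟩
    · rintro ⟨u, hu, rfl⟩
      rw [pf_mem_TS hM, pf_invol]; exact hu
  have hcard : (TS hM)ᶜ.card = (TS hM).card := by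
    rw [himg]
    exact Finset.card_image_of_injOn
      (Function.Involutive.injective (pf_invol hM)).injOn
  have := Finset.card_add_card_compl (TS hM)
  simp only [Fintype.card_fin] at this
  omega

/-- mk is surjective from TS onto the components of M ⊔ N -/
lemma TS_mk_surj {M N : SimpleGraph (Fin n)} (hM : IsPerfMatching M) :
    Function.Surjective
      (fun t : TS hM => (M ⊔ N).connectedComponentMk t) := by
  intro c
  obtain ⟨v, rfl⟩ := c.exists_rep
  by_cases hv : v ∈ TS hM
  · exact ⟨⟨v, hv⟩, rfl⟩
  · refine ⟨⟨pf hM v, (pf_mem_TS hM).mp hv⟩, ?_⟩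
    apply (ConnectedComponent.eq).mpr
    exact (Adj.reachable ((SimpleGraph.sup_adj _ _ _ _).mpr (Or.inl (pf_adj hM v)))).symm
  
lemma comp_sup_le {M N : SimpleGraph (Fin n)} (hM : IsPerfMatching M) :
    Nat.card (M ⊔ N).ConnectedComponent ≤ (TS hM).card := by
  have := Nat.card_le_card_of_surjective _ (TS_mk_surj (N := N) hM)
  simpa using this

/-- components of the matching itself: exactly the edges -/
lemma comp_self {M : SimpleGraph (Fin n)} (hM : IsPerfMatching M) :
    Nat.card M.ConnectedComponent = (TS hM).card := by
  have hbij : Function.Bijective (fun t : TS hM => M.connectedComponentMk t) := by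
    constructor
    · rintro ⟨t, ht⟩ ⟨t', ht'⟩ h
      have hr : M.Reachable t t' := (ConnectedComponent.eq).mp h
      rcases pf_reach hM hr with h1 | h1
      · exact (Subtype.ext h1.symm)
      · exact absurd ht (by rw [pf_mem_TS hM]; exact h1 ▸ ht')
    · intro c
      obtain ⟨v, rfl⟩ := c.exists_rep
      by_cases hv : v ∈ TS hM
      · exact ⟨⟨v, hv⟩, rfl⟩
      · refine ⟨⟨pf hM v, (pf_mem_TS hM).mp hv⟩, ?_⟩
        exact (ConnectedComponent.eq).mpr (Adj.reachable (pf_adj hM v)).symm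
  have := Nat.card_eq_of_bijective _ hbij
  simpa using this.symm


variable {n : ℕ}

lemma eq_of_pf_eq {M N : SimpleGraph (Fin n)} (hM : IsPerfMatching M)
    (hN : IsPerfMatching N) (h : ∀ v, pf hM v = pf hN v) : M = N := by
  ext v w
  rw [adj_iff_pf hM, adj_iff_pf hN, h]

lemma exists_pf_ne {M N : SimpleGraph (Fin n)} (hM : IsPerfMatching M)
    (hN : IsPerfMatching N) (h : M ≠ N) : ∃ v, pf hM v ≠ pf hN v := by
  by_contra hc
  push_neg at hc
  exact h (eq_of_pf_eq hM hN hc)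

/-- The representative in TS of the M-edge at v. -/
noncomputable def rep {M : SimpleGraph (Fin n)} (hM : IsPerfMatching M) (v : Fin n) : Fin n :=
  if v ∈ TS hM then v else pf hM v

lemma rep_mem {M : SimpleGraph (Fin n)} (hM : IsPerfMatching M) (v : Fin n) :
    rep hM v ∈ TS hM := by
  unfold rep; split
  · assumption
  · exact (pf_mem_TS hM).mp (by assumption)

lemma rep_cases {M : SimpleGraph (Fin n)} (hM : IsPerfMatching M) (v : Fin n) :
    rep hM v = v ∨ rep hM v = pf hM v := by
  unfold rep; split
  · exact Or.inl rfl
  · exact Or.inr rfl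

lemma reach_rep {M N : SimpleGraph (Fin n)} (hM : IsPerfMatching M) (v : Fin n) :
    (M ⊔ N).Reachable v (rep hM v) := by
  rcases rep_cases hM v with h | h <;> rw [h]
  · exact Adj.reachable ((SimpleGraph.sup_adj _ _ _ _).mpr (Or.inl (pf_adj hM v)))

lemma comp_max_eq {M N : SimpleGraph (Fin n)} (hM : IsPerfMatching M)
    (hN : IsPerfMatching N) (h : (TS hM).card ≤ Nat.card (M ⊔ N).ConnectedComponent) :
    M = N := by
  by_contra hne
  obtain ⟨v, hv⟩ := exists_pf_ne hM hN hne
  have hsurj := TS_mk_surj (N := N) hM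
  have hcard : Nat.card (M ⊔ N).ConnectedComponent = Nat.card (TS hM) := by
    have h1 := comp_sup_le (N := N) hM
    rw [Nat.card_eq_finsetCard]
    omega
  have hbij : Function.Bijective (fun t : TS hM => (M ⊔ N).connectedComponentMk t) :=
    (Nat.bijective_iff_surjective_and_card _).mpr ⟨hsurj, hcard.symm⟩
  have hr1 : (M ⊔ N).Reachable v (pf hN v) :=
    Adj.reachable ((SimpleGraph.sup_adj _ _ _ _).mpr (Or.inr (pf_adj hN v)))
  have hrep : (fun t : TS hM => (M ⊔ N).connectedComponentMk t)
        ⟨rep hM v, rep_mem hM v⟩ =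
      (fun t : TS hM => (M ⊔ N).connectedComponentMk t)
        ⟨rep hM (pf hN v), rep_mem hM (pf hN v)⟩ := by
    apply (ConnectedComponent.eq).mpr
    exact ((reach_rep hM v).symm.trans hr1).trans (reach_rep hM (pf hN v))
  have heq : rep hM v = rep hM (pf hN v) := Subtype.ext_iff.mp (hbij.1 hrep)
  have hgv : pf hN v ≠ v := pf_ne hN v
  rcases rep_cases hM v with h1 | h1 <;> rcases rep_cases hM (pf hN v) with h2 | h2 <;>
    rw [h1, h2] at heq
  · exact hgv heq.symm
  · exact hv ((congrArg (pf hM) heq).trans (pf_invol hM (pf hN v)))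
  · exact hv heq
  · have h3 := congrArg (pf hM) heq
    rw [pf_invol, pf_invol] at h3
    exact hgv h3.symm


variable {n : ℕ}

lemma flip {M N : SimpleGraph (Fin n)} (hM : IsPerfMatching M) (hN : IsPerfMatching N)
    (v : Fin n) (hv : pf hM v ≠ pf hN v) :
    ∃ (N' : SimpleGraph (Fin n)) (_ : IsPerfMatching N'), MatchAdj N N' ∧
      Nat.card (M ⊔ N).ConnectedComponent + 1 ≤ Nat.card (M ⊔ N').ConnectedComponent := by
  set g := pf hN with hgdef
  set a := v with hadef
  set c := pf hM v with hcdef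
  set b := g v with hbdef
  set d := g c with hddef
  have hinv : ∀ x, g (g x) = x := pf_invol hN
  have hga : g a = b := rfl
  have hgb : g b = a := hinv a
  have hgc : g c = d := rfl
  have hgd : g d = c := hinv c
  have hab : b ≠ a := pf_ne hN v
  have hac : c ≠ a := pf_ne hM v
  have hbc : c ≠ b := hv
  have hcd : d ≠ c := pf_ne hN c
  have had : d ≠ a := fun h => hbc (by rw [← hgd, h])
  have hbd : d ≠ b := fun h => hac (by rw [← hgd, h]; exact hgb)
  set g' : Fin n → Fin n := fun x =>
    if x = a then c else if x = c then a else if x = b then d else if x = d then b else g x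
    with hg'def
  have g'a : g' a = c := by simp [hg'def]
  have g'c : g' c = a := by simp [hg'def, hac]
  have g'b : g' b = d := by simp [hg'def, hab, Ne.symm hbc]
  have g'd : g' d = b := by simp [hg'def, had, hcd, hbd]
  have g'_off : ∀ x, x ≠ a → x ≠ c → x ≠ b → x ≠ d → g' x = g x := by
    intro x h1 h2 h3 h4; simp [hg'def, h1, h2, h3, h4]
  have hgne : ∀ x, x ≠ a → x ≠ c → x ≠ b → x ≠ d →
      g x ≠ a ∧ g x ≠ c ∧ g x ≠ b ∧ g x ≠ d := by
    intro x h1 h2 h3 h4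
    exact ⟨fun h => h3 ((hinv x).symm.trans ((congrArg g h).trans hga)),
      fun h => h4 ((hinv x).symm.trans ((congrArg g h).trans hgc)),
      fun h => h1 ((hinv x).symm.trans ((congrArg g h).trans hgb)),
      fun h => h2 ((hinv x).symm.trans ((congrArg g h).trans hgd))⟩
  have hg' : Function.Involutive g' := by
    intro x
    by_cases h1 : x = a
    · rw [h1, g'a, g'c]
    by_cases h2 : x = c
    · rw [h2, g'c, g'a]
    by_cases h3 : x = b
    · rw [h3, g'b, g'd]
    by_cases h4 : x = d
    · rw [h4, g'd, g'b]
    obtain ⟨k1, k2, k3, k4⟩ := hgne x h1 h2 h3 h4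
    rw [g'_off x h1 h2 h3 h4, g'_off _ k1 k2 k3 k4, hinv]
  have hfp' : ∀ x, g' x ≠ x := by
    intro x
    by_cases h1 : x = a
    · rw [h1, g'a]; exact hac
    by_cases h2 : x = c
    · rw [h2, g'c]; exact fun h => hac h.symm
    by_cases h3 : x = b
    · rw [h3, g'b]; exact hbd
    by_cases h4 : x = d
    · rw [h4, g'd]; exact fun h => hbd h.symm
    rw [g'_off x h1 h2 h3 h4]; exact pf_ne hN x
  refine ⟨mkM g' hg' hfp', mkM_perf hg' hfp', ?_, ?_⟩
  · -- MatchAdj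
    set N' := mkM g' hg' hfp' with hN'def
    have hNadj : ∀ x y, N.Adj x y ↔ g x = y := fun x y => adj_iff_pf hN
    have hN'adj : ∀ x y, N'.Adj x y ↔ g' x = y := fun _ _ => Iff.rfl
    have sd_adj : ∀ x y, (symmDiff N N').Adj x y ↔
        ((g x = y ∧ ¬ g' x = y) ∨ (g' x = y ∧ ¬ g x = y)) := by
      intro x y
      rw [symmDiff_def]
      simp only [SimpleGraph.sup_adj, SimpleGraph.sdiff_adj, hNadj, hN'adj]
    have h₁ : (symmDiff N N').Adj a b := (sd_adj a b).mpr (Or.inl ⟨hga, by rw [g'a]; exact hbc⟩)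
    have h₂ : (symmDiff N N').Adj b d := (sd_adj b d).mpr
      (Or.inr ⟨g'b, by rw [hgb]; exact fun h => had h.symm⟩)
    have h₃ : (symmDiff N N').Adj d c := (sd_adj d c).mpr
      (Or.inl ⟨hgd, by rw [g'd]; exact fun h => hbc h.symm⟩)
    have h₄ : (symmDiff N N').Adj c a := (sd_adj c a).mpr
      (Or.inr ⟨g'c, by rw [hgc]; exact had⟩)
    refine ⟨?_, a, Walk.cons h₁ (Walk.cons h₂ (Walk.cons h₃ (Walk.cons h₄ Walk.nil))), ?_, ?_, ?_⟩
    · intro h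
      have : N'.Adj a b := h ▸ ((hNadj a b).mpr hga)
      rw [hN'adj, g'a] at this
      exact hbc this
    · rw [Walk.isCycle_def]
      refine ⟨?_, by simp, ?_⟩
      · rw [Walk.isTrail_def]
        simp only [Walk.edges_cons, Walk.edges_nil]
        simp [List.nodup_cons, Sym2.eq_iff]
        tauto
      · simp only [Walk.support_cons, Walk.support_nil, List.tail_cons]
        simp [List.nodup_cons]
        tauto
    · simp
    · have sd_char : ∀ x y, (symmDiff N N').Adj x y →
          s(x,y) = s(a,b) ∨ s(x,y) = s(b,d) ∨ s(x,y) = s(d,c) ∨ s(x,y) = s(c,a) := by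
        intro x y h
        rw [sd_adj] at h
        by_cases h1 : x = a
        · rcases h with ⟨h5, _⟩ | ⟨h5, _⟩
          · rw [h1, hga] at h5; left; rw [h1, ← h5]
          · rw [h1, g'a] at h5; right; right; right; rw [h1, ← h5]; exact Sym2.eq_swap
        by_cases h2 : x = c
        · rcases h with ⟨h5, _⟩ | ⟨h5, _⟩
          · rw [h2, hgc] at h5; right; right; left; rw [h2, ← h5]; exact Sym2.eq_swap
          · rw [h2, g'c] at h5; right; right; right; rw [h2, ← h5]
        by_cases h3 : x = b
        · rcases h with ⟨h5, _⟩ | ⟨h5, _⟩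
          · rw [h3, hgb] at h5; left; rw [h3, ← h5]; exact Sym2.eq_swap
          · rw [h3, g'b] at h5; right; left; rw [h3, ← h5]
        by_cases h4 : x = d
        · rcases h with ⟨h5, _⟩ | ⟨h5, _⟩
          · rw [h4, hgd] at h5; right; right; left; rw [h4, ← h5]
          · rw [h4, g'd] at h5; right; left; rw [h4, ← h5]; exact Sym2.eq_swap
        · rw [g'_off x h1 h2 h3 h4] at h; tauto
      intro e he
      rcases e with ⟨x, y⟩
      have := sd_char x y ((SimpleGraph.mem_edgeSet _).mp he)
      simp only [Walk.edges_cons, Walk.edges_nil, List.mem_cons, List.not_mem_nil, or_false]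
      rcases this with h | h | h | h
      · exact Or.inl h
      · exact Or.inr (Or.inl h)
      · exact Or.inr (Or.inr (Or.inl h))
      · exact Or.inr (Or.inr (Or.inr h))
  · -- component count increases
    set N' := mkM g' hg' hfp' with hN'def
    set S : Set (Fin n) := {a, b, c, d} with hSdef
    have hoff : ∀ x y, x ∉ S → ((M ⊔ N).Adj x y ↔ (M ⊔ N').Adj x y) := by
      intro x y hx
      simp only [hSdef, Set.mem_insert_iff, Set.mem_singleton_iff, not_or] at hx
      obtain ⟨h1, h3, h2, h4⟩ := hx
      simp only [SimpleGraph.sup_adj]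
      have : N.Adj x y ↔ N'.Adj x y := by
        rw [adj_iff_pf hN]
        show g x = y ↔ g' x = y
        rw [g'_off x h1 h2 h3 h4]
      rw [this]
    have hpair : ∀ s ∈ S, (M ⊔ N).Reachable a s := by
      intro s hs
      have hrab : (M ⊔ N).Reachable a b :=
        Adj.reachable ((SimpleGraph.sup_adj _ _ _ _).mpr (Or.inr ((adj_iff_pf hN).mpr hga)))
      have hrac : (M ⊔ N).Reachable a c :=
        Adj.reachable ((SimpleGraph.sup_adj _ _ _ _).mpr (Or.inl (pf_adj hM v)))
      have hrcd : (M ⊔ N).Reachable c d :=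
        Adj.reachable ((SimpleGraph.sup_adj _ _ _ _).mpr (Or.inr ((adj_iff_pf hN).mpr hgc)))
      rcases hs with rfl | rfl | rfl | rfl
      exacts [Reachable.refl _, hrab, hrac, hrac.trans hrcd]
    have hnr : ¬ (M ⊔ N').Reachable a b := by
      intro hr
      obtain ⟨p⟩ := hr
      have hb : b ∈ ({a, c} : Set (Fin n)) := by
        refine walk_closed _ ?_ p (Or.inl rfl)
        rintro u (rfl | rfl) w hw
        · rcases (SimpleGraph.sup_adj _ _ _ _).mp hw with h | h
          · right; exact (pf_eq hM h : w = c)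
          · right; exact ((g'a ▸ (h : g' a = w)) : c = w).symm
        · rcases (SimpleGraph.sup_adj _ _ _ _).mp hw with h | h
          · left; exact (pf_eq hM h).trans (pf_invol hM v)
          · left; exact ((g'c ▸ (h : g' c = w)) : a = w).symm
      rcases hb with h | h
      · exact hab h
      · exact hbc h.symm
    have := comp_ge (M ⊔ N) (M ⊔ N') S hoff a hpair a b
      (by simp [hSdef]) (by simp [hSdef]) hnr
    exact this



/-- For every perfect matching `M` on `2m` vertices there is a perfect matching `N`
with `M ⊔ N` connected. -/
lemma exists_ham {m : ℕ} (hm : 1 ≤ m) {M : SimpleGraph (Fin (2 * m))}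
    (hM : IsPerfMatching M) :
    ∃ (N : SimpleGraph (Fin (2 * m))) (_ : IsPerfMatching N), (M ⊔ N).Connected := by
  haveI : NeZero m := ⟨by omega⟩
  have hT : (TS hM).card = m := by have := card_TS hM; omega
  set e := (TS hM).orderIsoOfFin hT with hedef
  set f := pf hM with hfdef
  set a : Fin m → Fin (2 * m) := fun i => (e i : Fin (2 * m)) with hadef
  set b : Fin m → Fin (2 * m) := fun i => f (a i) with hbdef
  have haT : ∀ i, a i ∈ TS hM := fun i => (e i).2
  have hbT : ∀ i, b i ∉ TS hM := by
    intro i h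
    rw [← pf_mem_TS hM] at h
    exact h (haT i)
  have hfb : ∀ i, f (b i) = a i := fun i => pf_invol hM (a i)
  have hidx : ∀ (i : Fin m) (h : a i ∈ TS hM), e.symm ⟨a i, h⟩ = i := by
    intro i h
    have : (⟨a i, h⟩ : TS hM) = e i := Subtype.ext rfl
    rw [this, OrderIso.symm_apply_apply]
  have hidx' : ∀ (x : Fin (2 * m)) (h : x ∈ TS hM) (i : Fin m), x = a i → e.symm ⟨x, h⟩ = i := by
    rintro x h i rfl
    exact hidx i h
  set g : Fin (2 * m) → Fin (2 * m) := fun x =>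
    if hx : x ∈ TS hM then b (e.symm ⟨x, hx⟩ - 1)
    else a (e.symm ⟨f x, (pf_mem_TS hM).mp hx⟩ + 1) with hgdef
  have hga : ∀ i, g (a i) = b (i - 1) := by
    intro i
    rw [hgdef]
    simp only [dif_pos (haT i)]
    rw [hidx i (haT i)]
  have hgb : ∀ i, g (b i) = a (i + 1) := by
    intro i
    rw [hgdef]
    simp only [dif_neg (hbT i)]
    congr 1
    rw [hidx' _ _ i (hfb i)]
  have hrep1 : ∀ (x : Fin (2 * m)) (hx : x ∈ TS hM), x = a (e.symm ⟨x, hx⟩) := by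
    intro x hx
    show x = ((e (e.symm ⟨x, hx⟩)) : Fin (2 * m))
    rw [OrderIso.apply_symm_apply]
  have hrep2 : ∀ (x : Fin (2 * m)) (hx : x ∉ TS hM),
      x = b (e.symm ⟨f x, (pf_mem_TS hM).mp hx⟩) := by
    intro x hx
    show x = f ((e (e.symm ⟨f x, _⟩)) : Fin (2 * m))
    rw [OrderIso.apply_symm_apply]
    exact (pf_invol hM x).symm
  have hg : Function.Involutive g := by
    intro x
    by_cases hx : x ∈ TS hM
    · have h1 := hrep1 x hx
      set i := e.symm ⟨x, hx⟩
      rw [h1, hga i, hgb (i - 1), sub_add_cancel]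
    · have h1 := hrep2 x hx
      set i := e.symm ⟨f x, (pf_mem_TS hM).mp hx⟩
      rw [h1, hgb i, hga (i + 1), add_sub_cancel_right]
  have hfp : ∀ x, g x ≠ x := by
    intro x
    by_cases hx : x ∈ TS hM
    · rw [hgdef]; simp only [dif_pos hx]
      intro h
      exact hbT _ (h ▸ hx)
    · rw [hgdef]; simp only [dif_neg hx]
      intro h
      exact hx (h ▸ haT _)
  refine ⟨mkM g hg hfp, mkM_perf hg hfp, ?_⟩
  set N := mkM g hg hfp with hNdef
  rw [connected_iff]
  refine ⟨?_, ⟨a 0⟩⟩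
  have hMadj : ∀ x, (M ⊔ N).Adj x (f x) :=
    fun x => (SimpleGraph.sup_adj _ _ _ _).mpr (Or.inl (pf_adj hM x))
  have hNadj : ∀ x, (M ⊔ N).Adj x (g x) :=
    fun x => (SimpleGraph.sup_adj _ _ _ _).mpr (Or.inr rfl)
  have hstep : ∀ k : ℕ, ∀ hk : k < m, (M ⊔ N).Reachable (a 0) (a ⟨k, hk⟩) := by
    intro k
    induction k with
    | zero =>
      intro hk
      have h0 : (0 : Fin m) = ⟨0, hk⟩ := by
        apply Fin.ext
        simp
      rw [← h0]
    | succ k ih =>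
      intro hk
      have hk' : k < m := by omega
      have h1 : (⟨k, hk'⟩ : Fin m) + 1 = ⟨k + 1, hk⟩ := by
        apply Fin.ext
        simp [Fin.add_def]
        exact Nat.mod_eq_of_lt hk
      have h2 : (M ⊔ N).Reachable (a ⟨k, hk'⟩) (a ⟨k + 1, hk⟩) := by
        have := (hMadj (a ⟨k, hk'⟩)).reachable.trans
          ((hNadj (b ⟨k, hk'⟩)).reachable)
        rwa [hgb, h1] at this
      exact (ih hk').trans h2
  have hall : ∀ i : Fin m, (M ⊔ N).Reachable (a 0) (a i) := by
    intro i
    exact hstep i.1 i.2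
  intro u w
  have key : ∀ x : Fin (2 * m), (M ⊔ N).Reachable (a 0) x := by
    intro x
    by_cases hx : x ∈ TS hM
    · have h1 := hrep1 x hx
      rw [h1]; exact hall _
    · have h1 := hrep2 x hx
      rw [h1]
      exact (hall _).trans (hMadj _).reachable
  exact (key u).symm.trans (key w)


variable {n : ℕ}

lemma comp_step {M X X' : SimpleGraph (Fin n)} (hX : IsPerfMatching X)
    (hX' : IsPerfMatching X') (hadj : MatchAdj X X') :
    Nat.card (M ⊔ X).ConnectedComponent ≤ Nat.card (M ⊔ X').ConnectedComponent + 1 := by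
  obtain ⟨hne, v₀, p, hcyc, hlen, hcov⟩ := hadj
  have uX : ∀ {u w w' : Fin n}, X.Adj u w → X.Adj u w' → w = w' :=
    fun h h' => (pf_eq hX h).trans (pf_eq hX h').symm
  have uX' : ∀ {u w w' : Fin n}, X'.Adj u w → X'.Adj u w' → w = w' :=
    fun h h' => (pf_eq hX' h).trans (pf_eq hX' h').symm
  have sdc : ∀ x y, (symmDiff X X').Adj x y ↔
      (X.Adj x y ∧ ¬ X'.Adj x y) ∨ (X'.Adj x y ∧ ¬ X.Adj x y) := by
    intro x y
    rw [symmDiff_def]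
    simp [SimpleGraph.sup_adj, SimpleGraph.sdiff_adj]
  cases p with
  | nil => simp at hlen
  | cons h01 p =>
  rename_i c₁
  cases p with
  | nil => simp at hlen
  | cons h12 p =>
  rename_i c₂
  cases p with
  | nil => simp at hlen
  | cons h23 p =>
  rename_i c₃
  cases p with
  | nil => simp at hlen
  | cons h34 p =>
    rename_i c₄
    cases p with
    | nil =>
      -- the main case : cycle v₀ c₁ c₂ c₃ v₀
      clear hlen
      have hsup := hcyc.support_nodup
      simp only [Walk.support_cons, Walk.support_nil, List.tail_cons, List.nodup_cons,
        List.mem_cons, List.not_mem_nil, or_false, List.mem_singleton,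
        List.nodup_nil, and_true, not_or] at hsup
      obtain ⟨⟨hd12, hd13, hd10⟩, ⟨hd23, hd20⟩, hd30⟩ := hsup
      set S : Set (Fin n) := {v₀, c₁, c₂, c₃} with hSdef
      have hmemS : ∀ x y : Fin n, (symmDiff X X').Adj x y → x ∈ S := by
        intro x y hxy
        have he : s(x, y) ∈ (symmDiff X X').edgeSet := (SimpleGraph.mem_edgeSet _).mpr hxy
        have := Walk.fst_mem_support_of_mem_edges _ (hcov _ he)
        simp only [Walk.support_cons, Walk.support_nil, List.mem_cons,
          List.mem_singleton, List.not_mem_nil, or_false] at this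
        rcases this with h | h | h | h | h <;> simp [hSdef, h]
      have hoff : ∀ x y, x ∉ S → ((M ⊔ X).Adj x y ↔ (M ⊔ X').Adj x y) := by
        intro x y hx
        simp only [SimpleGraph.sup_adj]
        have hXX' : X.Adj x y ↔ X'.Adj x y := by
          constructor
          · intro h
            by_contra hc
            exact hx (hmemS x y ((sdc x y).mpr (Or.inl ⟨h, hc⟩)))
          · intro h
            by_contra hc
            exact hx (hmemS x y ((sdc x y).mpr (Or.inr ⟨h, hc⟩)))
        rw [hXX']
      have hSne : S.Nonempty := ⟨v₀, by simp [hSdef]⟩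
      -- alternation
      have hadj01 := (sdc _ _).mp h01
      have hadj12 := (sdc _ _).mp h12
      have hadj23 := (sdc _ _).mp h23
      have hadj30 := (sdc _ _).mp h34
      have hreach : ∀ {x y : Fin n}, X.Adj x y → (M ⊔ X).Reachable x y :=
        fun h => Adj.reachable ((SimpleGraph.sup_adj _ _ _ _).mpr (Or.inr h))
      rcases hadj01 with ⟨hx01, _⟩ | ⟨hx01', hnx01⟩
      · -- X-edges are {v₀c₁, c₂c₃}
        have hx12' : X'.Adj c₁ c₂ := by
          rcases hadj12 with ⟨h, _⟩ | ⟨h, _⟩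
          · exact absurd (uX h hx01.symm) hd20
          · exact h
        have hx23 : X.Adj c₂ c₃ := by
          rcases hadj23 with ⟨h, _⟩ | ⟨h, _⟩
          · exact h
          · exact absurd (uX' h hx12'.symm) (fun hh => hd13 hh.symm)
        refine comp_le (M ⊔ X) (M ⊔ X') S hoff v₀ c₂ ?_ hSne
        intro s hs
        rcases hs with rfl | rfl | rfl | rfl
        · exact Or.inl (Reachable.refl _)
        · exact Or.inl (hreach hx01)
        · exact Or.inr (Reachable.refl _)
        · exact Or.inr (hreach hx23)
      · -- X-edges are {c₁c₂, c₃v₀}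
        have hx12 : X.Adj c₁ c₂ := by
          rcases hadj12 with ⟨h, _⟩ | ⟨h, _⟩
          · exact h
          · exact absurd (uX' h hx01'.symm) hd20
        have hx30 : X.Adj c₃ v₀ := by
          rcases hadj30 with ⟨h, _⟩ | ⟨h, _⟩
          · exact h
          · exact absurd (uX' h.symm hx01') (fun hh => hd13 hh.symm)
        refine comp_le (M ⊔ X) (M ⊔ X') S hoff c₁ v₀ ?_ hSne
        intro s hs
        rcases hs with rfl | rfl | rfl | rfl
        · exact Or.inr (Reachable.refl _)
        · exact Or.inl (Reachable.refl _)
        · exact Or.inl (hreach hx12)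
        · exact Or.inr (hreach hx30).symm
    | cons h45 p => simp [Walk.length_cons] at hlen


lemma card_cc_one {V : Type*} [Finite V] {G : SimpleGraph V} (h : G.Connected) :
    Nat.card G.ConnectedComponent = 1 := by
  have hsub : Subsingleton G.ConnectedComponent := by
    constructor
    intro x y
    obtain ⟨u, rfl⟩ := x.exists_rep
    obtain ⟨w, rfl⟩ := y.exists_rep
    exact (ConnectedComponent.eq).mpr (h.preconnected u w)
  have hne : Nonempty G.ConnectedComponent := by
    have := h.nonempty
    exact ⟨G.connectedComponentMk (Classical.arbitrary V)⟩
  rw [Nat.card_eq_one_iff_unique]; exact ⟨hsub, hne⟩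

lemma exists_pm (m : ℕ) (hm : 1 ≤ m) : Nonempty (PMVertex m) := by
  haveI : NeZero (2 * m) := ⟨by omega⟩
  set c : Fin (2 * m) := ⟨m, by omega⟩ with hc
  have hcc : c + c = 0 := by
    apply Fin.ext
    show ((c + c : Fin (2 * m))).val = (0 : Fin (2 * m)).val
    rw [Fin.add_def]
    have h1 : (c : Fin (2 * m)).val = m := rfl
    have h2 : (0 : Fin (2 * m)).val = 0 := rfl
    rw [h1, h2]
    have : m + m = 2 * m := by omega
    simp [this]
  have hg : Function.Involutive (fun x : Fin (2 * m) => x + c) := by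
    intro x
    show x + c + c = x
    rw [add_assoc, hcc, add_zero]
  have hfp : ∀ x : Fin (2 * m), (fun x : Fin (2 * m) => x + c) x ≠ x := by
    intro x h
    have h0 : c = 0 := by
      have := congrArg (fun y => y - x) h
      simpa [add_comm, add_sub_cancel_right] using this
    have := congrArg Fin.val h0
    simp at this
    have h2 : (0 : Fin (2 * m)).val = 0 := rfl
    have h3 := congrArg Fin.val h0
    rw [h2] at h3
    have h4 : c.val = m := rfl
    omega
  exact ⟨⟨mkM _ hg hfp, mkM_perf hg hfp⟩⟩

variable {m : ℕ}

noncomputable def cnt (M N : PMVertex m) : ℕ := Nat.card (M.1 ⊔ N.1).ConnectedComponent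

lemma cnt_pos (hm : 1 ≤ m) (M N : PMVertex m) : 1 ≤ cnt M N := by
  haveI : Nonempty (Fin (2 * m)) := ⟨⟨0, by omega⟩⟩
  haveI : Nonempty (M.1 ⊔ N.1).ConnectedComponent :=
    ⟨(M.1 ⊔ N.1).connectedComponentMk (Classical.arbitrary _)⟩
  exact Nat.card_pos

lemma TS_card_m (hm : 1 ≤ m) (M : PMVertex m) : (TS M.2).card = m := by
  have := card_TS M.2
  omega

lemma exists_walk_le (hm : 1 ≤ m) : ∀ (j : ℕ) (M N : PMVertex m), m ≤ cnt M N + j →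
    ∃ p : (matchingGraph m).Walk M N, p.length ≤ j := by
  intro j
  induction j with
  | zero =>
    intro M N h
    have h1 : M.1 = N.1 := by
      apply comp_max_eq M.2 N.2
      rw [TS_card_m hm M]
      simpa [cnt] using h
    have h2 : M = N := Subtype.ext h1
    subst h2
    exact ⟨Walk.nil, by simp⟩
  | succ j ih =>
    intro M N h
    by_cases heq : M = N
    · subst heq; exact ⟨Walk.nil, by simp⟩
    · have hne : M.1 ≠ N.1 := fun hh => heq (Subtype.ext hh)
      obtain ⟨v, hv⟩ := exists_pf_ne M.2 N.2 hne
      obtain ⟨N', hN', hmadj, hcnt⟩ := flip M.2 N.2 v hv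
      have h' : m ≤ cnt M ⟨N', hN'⟩ + j := by
        simp only [cnt] at *
        omega
      obtain ⟨p, hp⟩ := ih M ⟨N', hN'⟩ h'
      have hadj : (matchingGraph m).Adj (⟨N', hN'⟩ : PMVertex m) N :=
        Adj.symm (hmadj : (matchingGraph m).Adj N ⟨N', hN'⟩)
      refine ⟨p.concat hadj, ?_⟩
      rw [Walk.length_concat]
      omega

lemma walk_ge (M : PMVertex m) : ∀ (X N : PMVertex m) (p : (matchingGraph m).Walk X N),
    cnt M X ≤ cnt M N + p.length := by
  intro X N p
  induction p with
  | nil => simp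
  | @cons X Y N h q ih =>
    have step : cnt M X ≤ cnt M Y + 1 :=
      comp_step (M := M.1) X.2 Y.2 h
    rw [Walk.length_cons]
    omega

lemma dist_le_all (hm : 1 ≤ m) (M N : PMVertex m) :
    (matchingGraph m).dist M N ≤ m - 1 := by
  obtain ⟨p, hp⟩ := exists_walk_le hm (m - 1) M N (by have := cnt_pos hm M N; omega)
  exact le_trans (SimpleGraph.dist_le p) hp

lemma exists_far (hm : 1 ≤ m) (M : PMVertex m) :
    ∃ N : PMVertex m, (matchingGraph m).dist M N = m - 1 := by
  obtain ⟨Nh, hNh, hconn⟩ := exists_ham hm M.2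
  set N : PMVertex m := ⟨Nh, hNh⟩ with hN
  have hcnt1 : cnt M N = 1 := card_cc_one hconn
  have hcntMM : cnt M M = m := by
    show Nat.card (M.1 ⊔ M.1).ConnectedComponent = m
    rw [sup_idem, comp_self M.2, TS_card_m hm M]
  have hreach : (matchingGraph m).Reachable M N := by
    obtain ⟨p, _⟩ := exists_walk_le hm (m - 1) M N (by have := cnt_pos hm M N; omega)
    exact ⟨p⟩
  obtain ⟨q, hq⟩ := hreach.exists_walk_length_eq_dist
  have hge := walk_ge M M N q
  rw [hcntMM, hcnt1, hq] at hge
  exact ⟨N, le_antisymm (dist_le_all hm M N) (by omega)⟩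

end PM5

/-- The eccentricity of every vertex of `𝒫ₘ` is `m - 1`, and consequently the
diameter of `𝒫ₘ` is `m - 1`. -/
theorem stmt5 (m : ℕ) (hm : 1 ≤ m) :
    (∀ M : PMVertex m, (⨆ M' : PMVertex m, (matchingGraph m).dist M M') = m - 1) ∧
    (matchingGraph m).diam = m - 1 := by
  haveI hne : Nonempty (PMVertex m) := PM5.exists_pm m hm
  have hub : ∀ M N : PMVertex m, (matchingGraph m).dist M N ≤ m - 1 := PM5.dist_le_all hm
  have hfar : ∀ M : PMVertex m, ∃ N, (matchingGraph m).dist M N = m - 1 := PM5.exists_far hm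
  constructor
  · intro M
    apply le_antisymm
    · exact ciSup_le (hub M)
    · obtain ⟨N, hN⟩ := hfar M
      have hbdd : BddAbove (Set.range fun M' => (matchingGraph m).dist M M') := by
        refine ⟨m - 1, ?_⟩
        rintro x ⟨N', rfl⟩
        exact hub M N'
      calc m - 1 = (matchingGraph m).dist M N := hN.symm
      _ ≤ _ := le_ciSup hbdd N
  · have hedle : (matchingGraph m).ediam ≤ ((m - 1 : ℕ) : ℕ∞) := by
      apply ediam_le_of_edist_le
      intro u v
      obtain ⟨p, hp⟩ := PM5.exists_walk_le hm (m - 1) u v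
        (by have := PM5.cnt_pos hm u v; omega)
      calc (matchingGraph m).edist u v ≤ (p.length : ℕ∞) := SimpleGraph.edist_le p
      _ ≤ ((m - 1 : ℕ) : ℕ∞) := by exact_mod_cast hp
    have hedne : (matchingGraph m).ediam ≠ ⊤ :=
      (lt_of_le_of_lt hedle (ENat.coe_lt_top _)).ne
    apply le_antisymm
    · obtain ⟨u, v, huv⟩ := exists_dist_eq_diam (G := matchingGraph m)
      rw [← huv]
      exact hub u v
    · obtain ⟨M⟩ := hne
      obtain ⟨N, hN⟩ := hfar M
      rw [← hN]
      exact dist_le_diam hedne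
end
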